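/- arXiv:1109.4914 — 2 statements merged into one kernel-verified Lean document; each statement's English description precedes it below -/
import Mathlib

section
/- Let G be a finite simple graph and let (M, σ) be an induced matching of size k in G together with a dominating transversal σ. Then the homology class α_M ∈ H̃_{k-1}(I(G); ℚ) and the cohomology class σ^∨ ∈ H̃^{k-1}(I(G); ℚ) are both nonzero, and the evaluation pairing satisfies ⟨σ^∨, α_M⟩ = ±1. -/
attribute [local instance] Classical.propDecidable

noncomputable section

open Finset Module
open scoped DirectSum

universe u

/-- An abstract simplicial complex on vertex type `V`, encoded by its set of faces
(finite subsets of `V`), required to be downward closed and to contain the empty face.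
(The complex with only the empty face is the "empty complex", i.e. `S^{-1}`.) -/
structure SComplex (V : Type u) where
  faces : Set (Finset V)
  empty_mem : ∅ ∈ faces
  down_closed : ∀ {s t : Finset V}, s ∈ faces → t ⊆ s → t ∈ faces

namespace SComplex

variable {V : Type u}

/-- Ordered `j`-simplices of `K`: tuples of `j` vertices (repetitions allowed) spanning a
face of `K`.  Chains on these compute the reduced homology of `K` (this is the augmented,
unnormalized chain complex of the simplicial set associated to `K`); the level `j`
corresponds to reduced degree `j - 1`. -/
def OSimplex (K : SComplex V) (j : ℕ) : Type u :=
  {t : Fin j → V // Finset.univ.image t ∈ K.faces}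

/-- The `ℚ`-vector space of (level `j`, i.e. reduced degree `j-1`) simplicial chains. -/
abbrev Chain (K : SComplex V) (j : ℕ) : Type u := OSimplex K j →₀ ℚ

/-- The basis chain corresponding to a single ordered simplex. -/
def ofSimplex (K : SComplex V) (j : ℕ) (s : OSimplex K j) : Chain K j :=
  Finsupp.single s 1

/-- Boundary of a single ordered simplex: the alternating sum of its facets. -/
def bdryO (K : SComplex V) (j : ℕ) (s : OSimplex K (j + 1)) : Chain K j :=
  ∑ i : Fin (j + 1), Finsupp.single
    ⟨s.1 ∘ i.succAbove, K.down_closed s.2 (by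
      intro v hv
      simp only [Finset.mem_image] at hv ⊢
      obtain ⟨w, -, rfl⟩ := hv
      exact ⟨i.succAbove w, Finset.mem_univ _, rfl⟩)⟩
    ((-1 : ℚ) ^ (i : ℕ))

/-- The simplicial boundary map (from level `j+1` to level `j`). -/
def bdry (K : SComplex V) (j : ℕ) : Chain K (j + 1) →ₗ[ℚ] Chain K j :=
  Finsupp.lsum ℚ fun s => LinearMap.toSpanSingleton ℚ (Chain K j) (bdryO K j s)

/-- Cycles at level `j` (reduced degree `j - 1`).  At level `0` (spanned by the empty
simplex) every chain is a cycle: this is the augmented complex. -/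
def cyclesAt (K : SComplex V) : (j : ℕ) → Submodule ℚ (Chain K j)
  | 0 => ⊤
  | j + 1 => LinearMap.ker (bdry K j)

/-- Boundaries at level `j`. -/
def boundariesAt (K : SComplex V) (j : ℕ) : Submodule ℚ (Chain K j) :=
  LinearMap.range (bdry K j)

/-- Reduced simplicial homology with rational coefficients:
`homologyAt K j` is the reduced homology group `H̃_{j-1}(K; ℚ)`
(so `homologyAt K 0 = H̃_{-1}`, `homologyAt K (i+1) = H̃_i`). -/
abbrev homologyAt (K : SComplex V) (j : ℕ) : Type u :=
  cyclesAt K j ⧸ ((boundariesAt K j).comap (cyclesAt K j).subtype)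

/-- The homology class of a cycle. -/
def hClass (K : SComplex V) (j : ℕ) (z : Chain K j) (hz : z ∈ cyclesAt K j) :
    homologyAt K j :=
  Submodule.Quotient.mk ⟨z, hz⟩

/-- The reduced Betti number `β̃_{j-1}(K) = dim_ℚ H̃_{j-1}(K; ℚ)`. -/
def bettiAt (K : SComplex V) (j : ℕ) : ℕ := finrank ℚ (homologyAt K j)

/-- The total reduced Betti number `β̃(K) = ∑_i β̃_i(K)` (including degree `-1`). -/
def totalBetti (K : SComplex V) : ℕ := finrank ℚ (⨁ j : ℕ, homologyAt K j)

/-- Simplicial cochains with rational coefficients. -/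
abbrev Cochain (K : SComplex V) (j : ℕ) : Type u := Chain K j →ₗ[ℚ] ℚ

/-- The simplicial coboundary map, the transpose of the boundary. -/
def cobdry (K : SComplex V) (j : ℕ) : Cochain K j →ₗ[ℚ] Cochain K (j + 1) :=
  (bdry K j).dualMap

/-- Cocycles at level `j` (reduced degree `j-1`). -/
def cocyclesAt (K : SComplex V) (j : ℕ) : Submodule ℚ (Cochain K j) :=
  LinearMap.ker (cobdry K j)

/-- Coboundaries at level `j`. -/
def cobordsAt (K : SComplex V) : (j : ℕ) → Submodule ℚ (Cochain K j)
  | 0 => ⊥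
  | j + 1 => LinearMap.range (cobdry K j)

/-- Reduced simplicial cohomology with rational coefficients:
`cohomologyAt K j` is `H̃^{j-1}(K; ℚ)`. -/
abbrev cohomologyAt (K : SComplex V) (j : ℕ) : Type u :=
  cocyclesAt K j ⧸ ((cobordsAt K j).comap (cocyclesAt K j).subtype)

/-- The cohomology class of a cocycle. -/
def hcClass (K : SComplex V) (j : ℕ) (γ : Cochain K j) (hγ : γ ∈ cocyclesAt K j) :
    cohomologyAt K j :=
  Submodule.Quotient.mk ⟨γ, hγ⟩

/-- Evaluation of a cocycle on homology classes. -/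
def pairingAux (K : SComplex V) (j : ℕ) (γ : cocyclesAt K j) :
    homologyAt K j →ₗ[ℚ] ℚ :=
  Submodule.liftQ _ ((γ : Cochain K j).comp (cyclesAt K j).subtype) (by
    rintro ⟨z, hz⟩ hmem
    simp only [Submodule.mem_comap, Submodule.subtype_apply] at hmem
    obtain ⟨x, hx⟩ := hmem
    simp only [LinearMap.mem_ker, LinearMap.comp_apply, Submodule.subtype_apply]
    have hker : cobdry K j (γ : Cochain K j) = 0 := γ.2
    have h2 : (cobdry K j (γ : Cochain K j)) x = 0 := by rw [hker]; rfl
    calc (γ : Cochain K j) z = (γ : Cochain K j) (bdry K j x) := by rw [hx]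
      _ = (cobdry K j (γ : Cochain K j)) x := rfl
      _ = 0 := h2)

/-- The evaluation pairing `⟨·,·⟩ : H̃^{j-1}(K;ℚ) ⊗ H̃_{j-1}(K;ℚ) → ℚ`
given by evaluating cochains on chains. -/
def pairing (K : SComplex V) (j : ℕ) :
    cohomologyAt K j →ₗ[ℚ] homologyAt K j →ₗ[ℚ] ℚ :=
  Submodule.liftQ _
    { toFun := fun γ => pairingAux K j γ
      map_add' := by
        intro γ δ
        apply LinearMap.ext
        intro x
        obtain ⟨⟨z, hz⟩, rfl⟩ := Submodule.Quotient.mk_surjective _ x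
        simp [pairingAux, Submodule.liftQ_apply]
      map_smul' := by
        intro c γ
        apply LinearMap.ext
        intro x
        obtain ⟨⟨z, hz⟩, rfl⟩ := Submodule.Quotient.mk_surjective _ x
        simp [pairingAux, Submodule.liftQ_apply] }
    (by
      rintro ⟨γ, hγ⟩ hmem
      simp only [Submodule.mem_comap, Submodule.subtype_apply] at hmem
      simp only [LinearMap.mem_ker]
      apply LinearMap.ext
      intro x
      obtain ⟨⟨z, hz⟩, rfl⟩ := Submodule.Quotient.mk_surjective _ x
      simp only [LinearMap.coe_mk, AddHom.coe_mk, LinearMap.zero_apply]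
      cases j with
      | zero =>
          have : γ = 0 := by simpa [cobordsAt] using hmem
          simp [pairingAux, Submodule.liftQ_apply, this]
      | succ j =>
          obtain ⟨η, hη⟩ := hmem
          have hz0 : bdry K j z = 0 := hz
          simp only [pairingAux, Submodule.liftQ_apply]
          calc γ.comp (cyclesAt K (j+1)).subtype ⟨z, hz⟩ = γ z := rfl
            _ = (cobdry K j η) z := by rw [hη]
            _ = η (bdry K j z) := rfl
            _ = 0 := by rw [hz0]; exact map_zero η)

end SComplex
section Graphs

open SComplex

variable {V : Type u}

/-- The independence complex `I(G)` of a graph `G`: faces are the independent sets. -/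
def indepComplex (G : SimpleGraph V) : SComplex V where
  faces := {s : Finset V | ∀ v ∈ s, ∀ w ∈ s, ¬ G.Adj v w}
  empty_mem := by simp
  down_closed := by
    intro s t hs hts v hv w hw
    exact hs v (hts hv) w (hts hw)

/-- `s` is an independent set of the graph `G`. -/
def IsIndepSet (G : SimpleGraph V) (s : Finset V) : Prop :=
  ∀ v ∈ s, ∀ w ∈ s, ¬ G.Adj v w

/-- `σ` is a dominating set of `G`: every vertex is in the closed neighbourhood `N[σ]`. -/
def IsDominating (G : SimpleGraph V) (σ : Finset V) : Prop :=
  ∀ v : V, ∃ w ∈ σ, w = v ∨ G.Adj w v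

/-- The closed neighbourhood `N[σ]` of a finite set of vertices. -/
def closedNbhd (G : SimpleGraph V) (σ : Finset V) : Set V :=
  {v | ∃ w ∈ σ, w = v ∨ G.Adj w v}

/-- An induced matching of size `k` in `G`: `k` edges `(fst i, snd i)` such that
any two vertices belonging to distinct edges are distinct and non-adjacent. -/
structure InducedMatching (G : SimpleGraph V) (k : ℕ) where
  fst : Fin k → V
  snd : Fin k → V
  adj : ∀ i, G.Adj (fst i) (snd i)
  disjoint : ∀ i j, i ≠ j → fst i ≠ fst j ∧ fst i ≠ snd j ∧ snd i ≠ fst j ∧ snd i ≠ snd j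
  induced : ∀ i j, i ≠ j → ¬ G.Adj (fst i) (fst j) ∧ ¬ G.Adj (fst i) (snd j) ∧
    ¬ G.Adj (snd i) (fst j) ∧ ¬ G.Adj (snd i) (snd j)

namespace InducedMatching

variable {G : SimpleGraph V} {k : ℕ}

/-- The set of vertices covered by the matching. -/
def vertexFinset (M : InducedMatching G k) : Finset V :=
  Finset.univ.image M.fst ∪ Finset.univ.image M.snd

/-- A transversal of a matching: a set of vertices of the matching containing exactly one
vertex from each edge. -/
def IsTransversal (M : InducedMatching G k) (σ : Finset V) : Prop :=
  σ ⊆ M.vertexFinset ∧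
    ∀ i, (M.fst i ∈ σ ∧ M.snd i ∉ σ) ∨ (M.snd i ∈ σ ∧ M.fst i ∉ σ)

/-- The chain `([v_1] - [w_1]) ∧ ⋯ ∧ ([v_k] - [w_k])` representing the image `α_M` of the
fundamental class of the sphere `I(M) = S^{k-1}` in `I(G)`. -/
def matchingChain (M : InducedMatching G k) : Chain (indepComplex G) k :=
  ∑ c : Fin k → Bool,
    ((-1 : ℚ) ^ (Finset.univ.filter (fun i => c i = true)).card) •
      Finsupp.single
        ⟨fun i => if c i then M.snd i else M.fst i, by
          intro v hv w hw
          simp only [Finset.mem_image, Finset.mem_univ, true_and] at hv hw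
          obtain ⟨i, rfl⟩ := hv
          obtain ⟨j, rfl⟩ := hw
          by_cases hij : i = j
          · subst hij
            by_cases h : c i <;> simp [h, SimpleGraph.irrefl]
          · obtain ⟨h1, h2, h3, h4⟩ := M.induced i j hij
            by_cases hi : c i <;> by_cases hj : c j <;> simp [hi, hj, h1, h2, h3, h4]⟩
        1

end InducedMatching

namespace SComplex

/-- The coefficient of the cochain `σ^∨` on an ordered simplex: `±1` (the sign of the
corresponding permutation) on the orderings of `σ` and `0` on all other simplices. -/
def dualCoeff (K : SComplex V) (k : ℕ) (σ : Finset V) (s : OSimplex K k) : ℚ :=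
  if h : Function.Injective s.1 ∧ Finset.univ.image s.1 = σ then
    have hcard : Fintype.card {x // x ∈ σ} = k := by
      rw [Fintype.card_coe, ← h.2, Finset.card_image_of_injective _ h.1]
      simp
    ((Equiv.Perm.sign
      ((Equiv.ofBijective
          (fun i : Fin k => (⟨s.1 i, by
            rw [← h.2]; exact Finset.mem_image_of_mem _ (Finset.mem_univ i)⟩ : {x // x ∈ σ}))
          (by
            rw [Fintype.bijective_iff_injective_and_card]
            exact ⟨fun a b hab => h.1 (congrArg Subtype.val hab), by simp [hcard]⟩)).trans
        (Fintype.equivFinOfCardEq hcard)) : ℤ) : ℚ)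
  else 0

/-- The cochain `σ^∨` associated to an independent set `σ` of cardinality `k`: it assigns
`±1` to the two orientations of `σ` and `0` to all other simplices.  When `σ` is a maximal
independent set this cochain is a cocycle. -/
def dualCochain (K : SComplex V) (k : ℕ) (σ : Finset V) : Cochain K k :=
  Finsupp.linearCombination ℚ (dualCoeff K k σ)

end SComplex

end Graphs
section Aux

open SComplex

variable {V : Type u}

lemma aux_dualCoeff_det (K : SComplex V) (k : ℕ) (σ : Finset V)
    (hσ : Fintype.card {x // x ∈ σ} = k) (s : OSimplex K k) :
    dualCoeff K k σ s =
      Matrix.det (Matrix.of fun i j : Fin k =>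
        if s.1 i = ((Fintype.equivFinOfCardEq hσ).symm j : V) then (1 : ℚ) else 0) := by
  classical
  by_cases h : Function.Injective s.1 ∧ Finset.univ.image s.1 = σ
  · rw [dualCoeff, dif_pos h]
    set P := ((Equiv.ofBijective
          (fun i : Fin k => (⟨s.1 i, by
            rw [← h.2]; exact Finset.mem_image_of_mem _ (Finset.mem_univ i)⟩ : {x // x ∈ σ}))
          (by
            rw [Fintype.bijective_iff_injective_and_card]
            exact ⟨fun a b hab => h.1 (congrArg Subtype.val hab), by
              rw [Fintype.card_coe, ← h.2, Finset.card_image_of_injective _ h.1]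
              simp⟩)).trans
        (Fintype.equivFinOfCardEq hσ)) with hP
    have hM : (Matrix.of fun i j : Fin k =>
        if s.1 i = ((Fintype.equivFinOfCardEq hσ).symm j : V) then (1 : ℚ) else 0)
        = Equiv.Perm.permMatrix ℚ P := by
      ext i j
      have hmem : s.1 i ∈ σ := by
        rw [← h.2]; exact Finset.mem_image_of_mem _ (Finset.mem_univ i)
      have hiff : s.1 i = ((Fintype.equivFinOfCardEq hσ).symm j : V) ↔ j = P i := by
        constructor
        · intro hv
          have : (⟨s.1 i, hmem⟩ : {x // x ∈ σ}) = (Fintype.equivFinOfCardEq hσ).symm j :=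
            Subtype.ext hv
          exact ((congrArg (Fintype.equivFinOfCardEq hσ) this).trans
            (Equiv.apply_symm_apply _ j)).symm
        · intro hj
          subst hj
          simp only [hP, Equiv.trans_apply, Equiv.ofBijective_apply, Equiv.symm_apply_apply]
      simp only [Matrix.of_apply, Equiv.Perm.permMatrix, PEquiv.toMatrix_apply,
        Equiv.toPEquiv_apply, Option.mem_def, Option.some.injEq]
      by_cases hc : P i = j
      · rw [if_pos (hiff.mpr hc.symm), if_pos hc]
      · rw [if_neg (fun hv => hc (hiff.mp hv).symm), if_neg hc]
    show ((Equiv.Perm.sign P : ℤ) : ℚ) = _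
    rw [hM, Matrix.det_permutation]
  · rw [dualCoeff, dif_neg h]
    by_cases hinj : Function.Injective s.1
    · have himg : Finset.univ.image s.1 ≠ σ := fun him => h ⟨hinj, him⟩
      by_cases hall : ∀ i, s.1 i ∈ σ
      · exfalso
        apply himg
        apply Finset.eq_of_subset_of_card_le
        · intro v hv
          simp only [Finset.mem_image, Finset.mem_univ, true_and] at hv
          obtain ⟨i, rfl⟩ := hv
          exact hall i
        · rw [Finset.card_image_of_injective _ hinj, Finset.card_univ, Fintype.card_fin,
            ← Fintype.card_coe σ, hσ]
      · push_neg at hall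
        obtain ⟨i, hi⟩ := hall
        symm
        apply Matrix.det_eq_zero_of_row_eq_zero i
        intro j
        simp only [Matrix.of_apply]
        rw [if_neg]
        intro hEq
        exact hi (hEq ▸ Subtype.mem _)
    · rw [Function.not_injective_iff] at hinj
      obtain ⟨a, b, hab, hne⟩ := hinj
      symm
      apply Matrix.det_zero_of_row_eq hne
      funext j
      simp only [Matrix.of_apply, hab]

lemma aux_dualCochain_bdryO (K : SComplex V) (k : ℕ) (σ : Finset V)
    (hσ : Fintype.card {x // x ∈ σ} = k) (s : OSimplex K (k + 1)) :
    dualCochain K k σ (bdryO K k s) =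
      Matrix.det (Matrix.of fun i j : Fin (k + 1) =>
        Fin.cons (1 : ℚ)
          (fun l : Fin k =>
            if s.1 i = ((Fintype.equivFinOfCardEq hσ).symm l : V) then (1 : ℚ) else 0) j) := by
  rw [Matrix.det_succ_column_zero, bdryO, map_sum]
  apply Finset.sum_congr rfl
  intro i _
  erw [dualCochain, Finsupp.linearCombination_single, aux_dualCoeff_det K k σ hσ]
  simp only [Matrix.of_apply, Fin.cons_zero, mul_one, smul_eq_mul]
  congr 1

lemma aux_dualCochain_cocycle {V : Type u} (G : SimpleGraph V) (k : ℕ) (σ : Finset V)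
    (hσ : Fintype.card {x // x ∈ σ} = k) (hd : IsDominating G σ) :
    dualCochain (indepComplex G) k σ ∈ cocyclesAt (indepComplex G) k := by
  rw [cocyclesAt, LinearMap.mem_ker]
  apply Finsupp.lhom_ext
  intro s c
  have h1 : (cobdry (indepComplex G) k (dualCochain (indepComplex G) k σ))
      (Finsupp.single s c)
      = c * dualCochain (indepComplex G) k σ (bdryO (indepComplex G) k s) := by
    show (dualCochain (indepComplex G) k σ) (bdry (indepComplex G) k (Finsupp.single s c)) = _
    rw [bdry, Finsupp.lsum_single, LinearMap.toSpanSingleton_apply, map_smul, smul_eq_mul]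
  have hdet : Matrix.det (Matrix.of fun i j : Fin (k + 1) =>
      Fin.cons (1 : ℚ)
        (fun l : Fin k =>
          if s.1 i = ((Fintype.equivFinOfCardEq hσ).symm l : V) then (1 : ℚ) else 0) j) = 0 := by
   by_cases hinj : Function.Injective s.1
   · by_cases htwo : ∃ a b : Fin (k + 1), a ≠ b ∧ s.1 a ∉ σ ∧ s.1 b ∉ σ
     · obtain ⟨a, b, hab, ha, hb⟩ := htwo
       apply Matrix.det_zero_of_row_eq hab
       funext j
       refine Fin.cases ?_ (fun l => ?_) j
       · simp
       · simp only [Matrix.of_apply, Fin.cons_succ]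
         rw [if_neg, if_neg]
         · intro hEq; exact hb (by rw [hEq]; exact Subtype.mem _)
         · intro hEq; exact ha (by rw [hEq]; exact Subtype.mem _)
     · exfalso
       push_neg at htwo
       set T := Finset.univ.image s.1 with hT
       have hcardT : T.card = k + 1 := by
         rw [hT, Finset.card_image_of_injective _ hinj, Finset.card_univ, Fintype.card_fin]
       have hsd : (T \ σ).card ≤ 1 := by
         apply Finset.card_le_one.mpr
         intro a ha b hb
         rw [Finset.mem_sdiff] at ha hb
         obtain ⟨haT, haσ⟩ := ha
         obtain ⟨hbT, hbσ⟩ := hb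
         rw [hT, Finset.mem_image] at haT hbT
         obtain ⟨i, -, rfl⟩ := haT
         obtain ⟨i', -, rfl⟩ := hbT
         by_contra hne
         have hii' : i ≠ i' := fun hEq => hne (by rw [hEq])
         exact hbσ (htwo i i' hii' haσ)
       have hcardσ : σ.card = k := by rw [← Fintype.card_coe σ, hσ]
       have hintc : k ≤ (T ∩ σ).card := by
         have := Finset.card_inter_add_card_sdiff T σ
         omega
       have hσT : σ ⊆ T := by
         have heq : T ∩ σ = σ :=
           Finset.eq_of_subset_of_card_le Finset.inter_subset_right (by omega)
         rw [← heq]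
         exact Finset.inter_subset_left
       have hvex : ∃ v ∈ T, v ∉ σ := by
         by_contra hno
         push_neg at hno
         have : T ⊆ σ := hno
         have := Finset.card_le_card this
         omega
       obtain ⟨v, hvT, hvσ⟩ := hvex
       obtain ⟨w, hwσ, hwc⟩ := hd v
       rcases hwc with rfl | hadj
       · exact hvσ hwσ
       · exact s.2 w (hσT hwσ) v hvT hadj
   · obtain ⟨a, b, hab, hne⟩ := Function.not_injective_iff.mp hinj
     apply Matrix.det_zero_of_row_eq hne
     funext j
     refine Fin.cases ?_ (fun l => ?_) j <;> simp [hab]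
  rw [h1, aux_dualCochain_bdryO (indepComplex G) k σ hσ s, hdet, mul_zero]
  simp

end Aux
section Aux2

open SComplex

variable {V : Type u}

lemma aux_sign_prod (n : ℕ) (c : Fin n → Bool) :
    ((-1 : ℚ) ^ (Finset.univ.filter (fun i => c i = true)).card)
      = ∏ j : Fin n, (if c j then (-1 : ℚ) else 1) := by
  rw [Finset.prod_ite, Finset.prod_const, Finset.prod_const, one_pow, mul_one]

lemma aux_sign_update (n : ℕ) (c : Fin n → Bool) (i : Fin n) :
    ((-1 : ℚ) ^ (Finset.univ.filter
        (fun j => Function.update c i (!c i) j = true)).card)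
      = -((-1 : ℚ) ^ (Finset.univ.filter (fun j => c j = true)).card) := by
  rw [aux_sign_prod, aux_sign_prod]
  have hfun : ∀ j : Fin n, (if Function.update c i (!c i) j then (-1 : ℚ) else 1)
      = Function.update (fun j => if c j then (-1 : ℚ) else 1) i
          (if !c i then (-1 : ℚ) else 1) j := by
    intro j
    by_cases hj : j = i
    · subst hj; simp
    · simp [Function.update_of_ne hj]
  rw [Finset.prod_congr rfl (fun j _ => hfun j),
    Finset.prod_update_of_mem (Finset.mem_univ i)]
  have hrhs : ∏ j : Fin n, (if c j then (-1 : ℚ) else 1)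
      = (if c i then (-1 : ℚ) else 1) * ∏ j ∈ Finset.univ \ {i}, (if c j then (-1 : ℚ) else 1) := by
    rw [← Finset.prod_update_of_mem (Finset.mem_univ i)]
    apply Finset.prod_congr rfl
    intro j _
    by_cases hj : j = i
    · subst hj; simp
    · simp [Function.update_of_ne hj]
  rw [hrhs]
  cases hc : c i <;> simp [hc]

lemma aux_matchingChain_cycle {G : SimpleGraph V} {k : ℕ} (M : InducedMatching G k) :
    M.matchingChain ∈ cyclesAt (indepComplex G) k := by
  cases k with
  | zero => exact Submodule.mem_top
  | succ m =>
    show M.matchingChain ∈ LinearMap.ker (bdry (indepComplex G) m)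
    rw [LinearMap.mem_ker, InducedMatching.matchingChain, map_sum]
    have hterm : ∀ c : Fin (m + 1) → Bool, ∀ (t : OSimplex (indepComplex G) (m + 1))
        (coef : ℚ), bdry (indepComplex G) m (coef • Finsupp.single t 1)
          = coef • bdryO (indepComplex G) m t := by
      intro c t coef
      rw [map_smul, bdry, Finsupp.lsum_single, LinearMap.toSpanSingleton_apply, one_smul]
    calc (∑ c : Fin (m + 1) → Bool, bdry (indepComplex G) m
            (((-1 : ℚ) ^ (Finset.univ.filter (fun i => c i = true)).card) •
              Finsupp.single _ 1))
        = ∑ c : Fin (m + 1) → Bool, ∑ i : Fin (m + 1),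
            ((-1 : ℚ) ^ (Finset.univ.filter (fun i => c i = true)).card) •
              Finsupp.single _ ((-1 : ℚ) ^ (i : ℕ)) := by
          apply Finset.sum_congr rfl
          intro c _
          erw [hterm c _ _, bdryO, Finset.smul_sum]
          rfl
      _ = ∑ i : Fin (m + 1), ∑ c : Fin (m + 1) → Bool,
            ((-1 : ℚ) ^ (Finset.univ.filter (fun i => c i = true)).card) •
              Finsupp.single _ ((-1 : ℚ) ^ (i : ℕ)) := Finset.sum_comm
      _ = 0 := by
          apply Finset.sum_eq_zero
          intro i _
          apply Finset.sum_ninvolution (fun c => Function.update c i (!c i))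
          · intro c
            rw [aux_sign_update, neg_smul, add_neg_eq_zero]
            congr 1
            refine congrArg (fun t => Finsupp.single t ((-1 : ℚ) ^ (i : ℕ))) ?_
            apply Subtype.ext
            funext j
            show (fun l => if c l = true then M.snd l else M.fst l) (i.succAbove j) = (fun l => if Function.update c i (!c i) l = true then M.snd l else M.fst l) (i.succAbove j)
            simp only
            rw [Function.update_of_ne (Fin.succAbove_ne i j)]
          · intro c hne
            intro hEq
            have := congrFun hEq i
            simp at this
          · intro c; exact Finset.mem_univ _
          · intro c
            funext j
            by_cases hj : j = i
            · subst hj; simp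
            · simp [Function.update_of_ne hj]

end Aux2
section Aux3

open SComplex

variable {V : Type u}

lemma aux_pairing_eval (K : SComplex V) (j : ℕ) (γ : Cochain K j)
    (hγ : γ ∈ cocyclesAt K j) (z : Chain K j) (hz : z ∈ cyclesAt K j) :
    pairing K j (hcClass K j γ hγ) (hClass K j z hz) = γ z := rfl

end Aux3
section Aux4
open SComplex
variable {V : Type u}

lemma aux_dualCoeff_pm (K : SComplex V) (k : ℕ) (σ : Finset V) (s : OSimplex K k)
    (h : Function.Injective s.1 ∧ Finset.univ.image s.1 = σ) :
    dualCoeff K k σ s = 1 ∨ dualCoeff K k σ s = -1 := by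
  rw [dualCoeff, dif_pos h]
  have hcard : Fintype.card {x // x ∈ σ} = k := by
    rw [Fintype.card_coe, ← h.2, Finset.card_image_of_injective _ h.1]
    simp
  set P := ((Equiv.ofBijective
        (fun i : Fin k => (⟨s.1 i, by
          rw [← h.2]; exact Finset.mem_image_of_mem _ (Finset.mem_univ i)⟩ : {x // x ∈ σ}))
        (by
          rw [Fintype.bijective_iff_injective_and_card]
          exact ⟨fun a b hab => h.1 (congrArg Subtype.val hab), by
            rw [Fintype.card_coe, ← h.2, Finset.card_image_of_injective _ h.1]
            simp⟩)).trans
      (Fintype.equivFinOfCardEq hcard)) with hP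
  show ((Equiv.Perm.sign P : ℤ) : ℚ) = 1 ∨ ((Equiv.Perm.sign P : ℤ) : ℚ) = -1
  rcases Int.units_eq_one_or (Equiv.Perm.sign P) with hu | hu
  · left; rw [hu]; simp
  · right; rw [hu]; simp

end Aux4
/-- If `(M, σ)` is an induced matching of size `k` with a dominating
transversal in a finite simple graph `G`, then the homology class
`α_M ∈ H̃_{k-1}(I(G); ℚ)` (represented by the explicit cycle `matchingChain M`) and the
cohomology class `σ^∨ ∈ H̃^{k-1}(I(G); ℚ)` (represented by the cochain `dualCochain`)
are both nonzero, and `⟨σ^∨, α_M⟩ = ±1`.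
(Here level `k` corresponds to reduced (co)homology degree `k - 1`.) -/
theorem statement0 {V : Type} [Fintype V] (G : SimpleGraph V) (k : ℕ)
    (M : InducedMatching G k) (σ : Finset V)
    (ht : M.IsTransversal σ) (hd : IsDominating G σ) :
    ∃ (hz : M.matchingChain ∈ SComplex.cyclesAt (indepComplex G) k)
      (hc : SComplex.dualCochain (indepComplex G) k σ ∈
        SComplex.cocyclesAt (indepComplex G) k),
      SComplex.hClass (indepComplex G) k M.matchingChain hz ≠ 0 ∧
      SComplex.hcClass (indepComplex G) k (SComplex.dualCochain (indepComplex G) k σ) hc ≠ 0 ∧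
      (SComplex.pairing (indepComplex G) k
          (SComplex.hcClass (indepComplex G) k (SComplex.dualCochain (indepComplex G) k σ) hc)
          (SComplex.hClass (indepComplex G) k M.matchingChain hz) = 1 ∨
       SComplex.pairing (indepComplex G) k
          (SComplex.hcClass (indepComplex G) k (SComplex.dualCochain (indepComplex G) k σ) hc)
          (SComplex.hClass (indepComplex G) k M.matchingChain hz) = -1) := by
  classical
  have hinj : ∀ c : Fin k → Bool,
      Function.Injective (fun i => if c i then M.snd i else M.fst i) := by
    intro c a b hEq
    by_contra hne
    obtain ⟨h1, h2, h3, h4⟩ := M.disjoint a b hne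
    by_cases hca : c a <;> by_cases hcb : c b <;> simp [hca, hcb] at hEq
    exacts [h4 hEq, h3 hEq, h2 hEq, h1 hEq]
  set c₀ : Fin k → Bool := fun i => if M.snd i ∈ σ then true else false with hc₀def
  have hsel : ∀ i, (if c₀ i then M.snd i else M.fst i) ∈ σ := by
    intro i
    by_cases hs : M.snd i ∈ σ
    · simp [hc₀def, hs]
    · rcases ht.2 i with ⟨hf, hsn⟩ | ⟨hs', -⟩
      · simp [hc₀def, hs, hf]
      · exact absurd hs' hs
  have himg : Finset.univ.image (fun i => if c₀ i then M.snd i else M.fst i) = σ := by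
    apply Finset.Subset.antisymm
    · intro v hv
      simp only [Finset.mem_image, Finset.mem_univ, true_and] at hv
      obtain ⟨i, rfl⟩ := hv
      exact hsel i
    · intro v hv
      have hvf := ht.1 hv
      rw [InducedMatching.vertexFinset, Finset.mem_union] at hvf
      simp only [Finset.mem_image, Finset.mem_univ, true_and] at hvf
      rcases hvf with ⟨i, rfl⟩ | ⟨i, rfl⟩
      · rcases ht.2 i with ⟨hf, hsn⟩ | ⟨hs', hfn⟩
        · have hc0 : c₀ i = false := by simp [hc₀def, hsn]
          exact Finset.mem_image.mpr ⟨i, Finset.mem_univ i, by simp [hc0]⟩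
        · exact absurd hv hfn
      · have hc0 : c₀ i = true := by simp [hc₀def, hv]
        exact Finset.mem_image.mpr ⟨i, Finset.mem_univ i, by simp [hc0]⟩
  have hσcard : Fintype.card {x // x ∈ σ} = k := by
    rw [Fintype.card_coe, ← himg, Finset.card_image_of_injective _ (hinj c₀),
      Finset.card_univ, Fintype.card_fin]
  have hface : Finset.univ.image (fun i => if c₀ i then M.snd i else M.fst i) ∈
      (indepComplex G).faces := by
    intro v hv w hw
    simp only [Finset.mem_image, Finset.mem_univ, true_and] at hv hw
    obtain ⟨i, rfl⟩ := hv
    obtain ⟨j, rfl⟩ := hw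
    by_cases hij : i = j
    · subst hij
      by_cases h : c₀ i <;> simp [h, SimpleGraph.irrefl]
    · obtain ⟨h1, h2, h3, h4⟩ := M.induced i j hij
      by_cases hi : c₀ i <;> by_cases hj : c₀ j <;> simp [hi, hj, h1, h2, h3, h4]
  set t₀ : SComplex.OSimplex (indepComplex G) k :=
    ⟨fun i => if c₀ i then M.snd i else M.fst i, hface⟩ with ht₀
  have hz' := aux_matchingChain_cycle M
  have hc' := aux_dualCochain_cocycle G k σ hσcard hd
  have heval : SComplex.dualCochain (indepComplex G) k σ M.matchingChain
      = ((-1 : ℚ) ^ (Finset.univ.filter (fun i => c₀ i = true)).card) *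
          SComplex.dualCoeff (indepComplex G) k σ t₀ := by
    rw [InducedMatching.matchingChain, map_sum, Finset.sum_eq_single c₀]
    · rw [map_smul, smul_eq_mul]
      congr 1
      erw [SComplex.dualCochain, Finsupp.linearCombination_single, one_smul]
    · intro c _ hne
      erw [map_smul, SComplex.dualCochain, Finsupp.linearCombination_single, one_smul,
        SComplex.dualCoeff, dif_neg, smul_zero]
      rintro ⟨hcinj, hcimg⟩
      have hdis : ∃ i, c i ≠ c₀ i := by
        by_contra hno
        push_neg at hno
        exact hne (funext hno)
      obtain ⟨i, hi⟩ := hdis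
      have hnot : (if c i then M.snd i else M.fst i) ∉ σ := by
        cases hci : c i
        · have hc0 : c₀ i = true := by
            revert hi; rw [hci]; cases h0 : c₀ i <;> simp
          have hsnd : M.snd i ∈ σ := by
            by_contra hs
            simp [hc₀def, hs] at hc0
          rcases ht.2 i with ⟨hf, hsn⟩ | ⟨-, hfn⟩
          · exact absurd hsnd hsn
          · simpa using hfn
        · have hc0 : c₀ i = false := by
            revert hi; rw [hci]; cases h0 : c₀ i <;> simp
          have hsnd : M.snd i ∉ σ := by
            intro hs
            simp [hc₀def, hs] at hc0
          simpa using hsnd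
      exact hnot (hcimg ▸ Finset.mem_image_of_mem _ (Finset.mem_univ i))
    · intro hni
      exact absurd (Finset.mem_univ c₀) hni
  have hpm : SComplex.dualCoeff (indepComplex G) k σ t₀ = 1 ∨
      SComplex.dualCoeff (indepComplex G) k σ t₀ = -1 := by
    exact aux_dualCoeff_pm (indepComplex G) k σ t₀ ⟨hinj c₀, himg⟩
  have hcoef : ((-1 : ℚ) ^ (Finset.univ.filter (fun i => c₀ i = true)).card) = 1 ∨
      ((-1 : ℚ) ^ (Finset.univ.filter (fun i => c₀ i = true)).card) = -1 := by
    rcases Nat.even_or_odd (Finset.univ.filter (fun i => c₀ i = true)).card with h | h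
    · left; exact h.neg_one_pow
    · right; exact h.neg_one_pow
  have hval : SComplex.dualCochain (indepComplex G) k σ M.matchingChain = 1 ∨
      SComplex.dualCochain (indepComplex G) k σ M.matchingChain = -1 := by
    rw [heval]
    rcases hcoef with h1 | h1 <;> rcases hpm with h2 | h2 <;> rw [h1, h2] <;> norm_num
  refine ⟨hz', hc', ?_, ?_, ?_⟩
  · intro h0
    have h1 : SComplex.pairing (indepComplex G) k
        (SComplex.hcClass (indepComplex G) k (SComplex.dualCochain (indepComplex G) k σ) hc')
        (SComplex.hClass (indepComplex G) k M.matchingChain hz') = 0 := by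
      rw [h0, map_zero]
    rw [aux_pairing_eval] at h1
    rcases hval with h | h <;> rw [h] at h1 <;> norm_num at h1
  · intro h0
    have h1 : SComplex.pairing (indepComplex G) k
        (SComplex.hcClass (indepComplex G) k (SComplex.dualCochain (indepComplex G) k σ) hc')
        (SComplex.hClass (indepComplex G) k M.matchingChain hz') = 0 := by
      rw [h0, map_zero, LinearMap.zero_apply]
    rw [aux_pairing_eval] at h1
    rcases hval with h | h <;> rw [h] at h1 <;> norm_num at h1
  · rcases hval with h | h
    · left; rw [aux_pairing_eval, h]
    · right; rw [aux_pairing_eval, h]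
end
end

section
/- Let K be a finite simplicial complex with a partition of its vertex set V(K) = U ⊔ W, and suppose there is a constant B such that for every face σ of the induced subcomplex K[U] (including the empty face) the total reduced rational Betti number of lk_W σ is at most B. Then β̃(K) ≤ B · |K[U]|, where |K[U]| is the number of faces of K[U] including the empty face. -/
attribute [local instance] Classical.propDecidable

noncomputable section

open Finset Module
open scoped DirectSum

universe u

namespace SComplex

variable {V : Type u}

/-- The faces of the induced subcomplex `K[U]`; its cardinality (`Set.ncard`, counting
the empty face) is the quantity `|K[U]|`. -/
def facesIn (K : SComplex V) (U : Set V) : Set (Finset V) :=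
  {s | s ∈ K.faces ∧ ∀ v ∈ s, v ∈ U}

/-- For a vertex partition `V = U ⊔ W` (`W = Uᶜ`) and a face `σ` of `K[U]`, the
subcomplex `lk_W σ` of `K[W]`: the faces `τ ⊆ W` with `τ ⊔ σ ∈ K`. -/
def lkW (K : SComplex V) (U : Set V) (σ : Finset V) (hσ : σ ∈ K.faces) : SComplex V where
  faces := {τ | (∀ v ∈ τ, v ∉ U) ∧ τ ∪ σ ∈ K.faces}
  empty_mem := ⟨by simp, by simpa using hσ⟩
  down_closed := by
    rintro s t ⟨hs1, hs2⟩ hts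
    exact ⟨fun v hv => hs1 v (hts hv),
      K.down_closed hs2 (Finset.union_subset_union hts le_rfl)⟩

/-- For a vertex partition `V = U ⊔ W` and a face `σ` of `K[U]`, the subcomplex
`st_W σ = (lk_W σ) ∗ σ` of `K`: the faces `τ ∈ K` with `τ ∩ U ⊆ σ` and
`τ ∩ W ∈ lk_W σ`. -/
def stW (K : SComplex V) (U : Set V) (σ : Finset V) (hσ : σ ∈ K.faces) : SComplex V where
  faces := {τ | τ ∈ K.faces ∧ (∀ v ∈ τ, v ∈ U → v ∈ σ) ∧
    (τ.filter (fun v => v ∉ U)) ∪ σ ∈ K.faces}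
  empty_mem := ⟨K.empty_mem, by simp, by simpa using hσ⟩
  down_closed := by
    rintro s t ⟨hs1, hs2, hs3⟩ hts
    refine ⟨K.down_closed hs1 hts, fun v hv hvU => hs2 v (hts hv) hvU,
      K.down_closed hs3 ?_⟩
    exact Finset.union_subset_union (Finset.filter_subset_filter _ hts) le_rfl

end SComplex

set_option maxHeartbeats 1000000
set_option synthInstance.maxHeartbeats 1000000

namespace SComplex

variable {V : Type u}

lemma ext' {K₁ K₂ : SComplex V} (h : K₁.faces = K₂.faces) : K₁ = K₂ := by
  cases K₁; cases K₂; simpa using h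

lemma image_comp_subset {n m : ℕ} (t : Fin n → V) (f : Fin m → Fin n) :
    Finset.univ.image (t ∘ f) ⊆ Finset.univ.image t := by
  intro v hv
  simp only [Finset.mem_image] at hv ⊢
  obtain ⟨w, -, rfl⟩ := hv
  exact ⟨f w, Finset.mem_univ _, rfl⟩

instance instFintypeOSimplex (K : SComplex V) (j : ℕ) [Fintype V] :
    Fintype (K.OSimplex j) := by
  unfold OSimplex; infer_instance

instance instFDChain (K : SComplex V) (j : ℕ) [Fintype V] :
    FiniteDimensional ℚ (Chain K j) :=
  Module.Finite.of_basis (Finsupp.basisSingleOne)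

lemma bdry_single (K : SComplex V) (j : ℕ) (s : OSimplex K (j+1)) (c : ℚ) :
    bdry K j (Finsupp.single s c) = c • bdryO K j s := by
  simp [bdry, LinearMap.toSpanSingleton_apply]

/-- The `i`-th facet of an ordered simplex. -/
def faceO (K : SComplex V) (j : ℕ) (s : OSimplex K (j+1)) (i : Fin (j+1)) : OSimplex K j :=
  ⟨s.1 ∘ i.succAbove, K.down_closed s.2 (image_comp_subset _ _)⟩

lemma bdryO_eq (K : SComplex V) (j : ℕ) (s : OSimplex K (j+1)) :
    bdryO K j s = ∑ i : Fin (j+1), Finsupp.single (faceO K j s i) ((-1:ℚ)^(i:ℕ)) := rfl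

lemma succAbove_val {n : ℕ} (p : Fin (n+1)) (x : Fin n) :
    (p.succAbove x : ℕ) = if (x:ℕ) < (p:ℕ) then (x:ℕ) else (x:ℕ)+1 := by
  simp only [Fin.succAbove, Fin.lt_def, Fin.coe_castSucc]
  split_ifs with h
  · simp
  · simp [Fin.val_succ]

lemma succAbove_succAbove {n : ℕ} (i : Fin (n+2)) (k : Fin (n+1))
    (h : (k:ℕ) < (i:ℕ)) (x : Fin n) :
    i.succAbove (k.succAbove x) =
      (⟨(k:ℕ), by omega⟩ : Fin (n+2)).succAbove
        ((⟨(i:ℕ)-1, by have := i.isLt; omega⟩ : Fin (n+1)).succAbove x) := by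
  apply Fin.val_injective
  have hx := x.isLt
  have hi := i.isLt
  simp only [succAbove_val]
  split_ifs <;> omega

lemma bdry_bdryO (K : SComplex V) (j : ℕ) (s : OSimplex K (j+2)) :
    bdry K j (bdryO K (j+1) s) = 0 := by
  rw [bdryO_eq, map_sum]
  simp only [bdry_single, bdryO_eq, Finset.smul_sum, Finsupp.smul_single, smul_eq_mul]
  set F : Fin (j+2) × Fin (j+1) → Chain K j := fun p =>
    Finsupp.single (faceO K j (faceO K (j+1) s p.1) p.2) ((-1:ℚ)^(p.1:ℕ) * (-1:ℚ)^(p.2:ℕ))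
    with hF
  show ∑ i : Fin (j+2), ∑ k : Fin (j+1), F (i, k) = 0
  rw [← Fintype.sum_prod_type]
  have key : ∀ (i : Fin (j+2)) (k : Fin (j+1)), (k:ℕ) < (i:ℕ) →
      F (i, k) + F (⟨(k:ℕ), by have := k.isLt; omega⟩,
        ⟨(i:ℕ)-1, by have := i.isLt; omega⟩) = 0 := by
    intro i k hki
    have hidx : faceO K j (faceO K (j+1) s i) k =
        faceO K j (faceO K (j+1) s ⟨(k:ℕ), by have := k.isLt; omega⟩)
          ⟨(i:ℕ)-1, by have := i.isLt; omega⟩ := by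
      apply Subtype.ext
      funext x
      exact congrArg s.1 (succAbove_succAbove i k hki x)
    rw [hF]
    simp only []
    rw [hidx, ← Finsupp.single_add]
    convert Finsupp.single_zero _
    swap
    have h1 : (-1:ℚ)^(i:ℕ) = -(-1:ℚ)^((i:ℕ)-1) := by
      conv_lhs => rw [show (i:ℕ) = ((i:ℕ)-1)+1 by omega]
      rw [pow_succ]; ring
    rw [h1]; ring
    rfl
  let g : Fin (j+2) × Fin (j+1) → Fin (j+2) × Fin (j+1) := fun p =>
    if h : (p.2:ℕ) < (p.1:ℕ) then
      (⟨(p.2:ℕ), by have := p.2.isLt; omega⟩, ⟨(p.1:ℕ)-1, by have := p.1.isLt; omega⟩)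
    else (⟨(p.2:ℕ)+1, by have := p.2.isLt; have := p.1.isLt; omega⟩,
      ⟨(p.1:ℕ), by have := p.2.isLt; have := p.1.isLt; omega⟩)
  refine Finset.sum_ninvolution g ?_ ?_ ?_ ?_
  · intro p
    by_cases h : (p.2:ℕ) < (p.1:ℕ)
    · show F p + F (g p) = 0
      have : g p = (⟨(p.2:ℕ), by have := p.2.isLt; omega⟩,
          ⟨(p.1:ℕ)-1, by have := p.1.isLt; omega⟩) := dif_pos h
      rw [this]
      exact key p.1 p.2 h
    · show F p + F (g p) = 0
      have hgp : g p = (⟨(p.2:ℕ)+1, by have := p.2.isLt; have := p.1.isLt; omega⟩,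
          ⟨(p.1:ℕ), by have := p.2.isLt; have := p.1.isLt; omega⟩) := dif_neg h
      rw [hgp]
      have h2 : ((⟨(p.1:ℕ), by have := p.2.isLt; have := p.1.isLt; omega⟩ : Fin (j+1)):ℕ)
          < ((⟨(p.2:ℕ)+1, by have := p.2.isLt; have := p.1.isLt; omega⟩ : Fin (j+2)):ℕ) := by
        show (p.1:ℕ) < (p.2:ℕ)+1; omega
      have hk := key (⟨(p.2:ℕ)+1, by have := p.2.isLt; have := p.1.isLt; omega⟩)
        (⟨(p.1:ℕ), by have := p.2.isLt; have := p.1.isLt; omega⟩) h2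
      rw [add_comm] at hk
      have e1 : ((⟨((⟨(p.1:ℕ), by have := p.2.isLt; have := p.1.isLt; omega⟩ : Fin (j+1)):ℕ),
          by have := p.2.isLt; have := p.1.isLt; omega⟩ : Fin (j+2)),
          (⟨((⟨(p.2:ℕ)+1, by have := p.2.isLt; have := p.1.isLt; omega⟩ : Fin (j+2)):ℕ)-1,
          by have := p.2.isLt; omega⟩ : Fin (j+1))) = p := by
        apply Prod.ext <;> apply Fin.val_injective <;> simp
      rw [e1] at hk
      exact hk
  · intro p hne heq
    by_cases h : (p.2:ℕ) < (p.1:ℕ)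
    · have : g p = (⟨(p.2:ℕ), by have := p.2.isLt; omega⟩,
          ⟨(p.1:ℕ)-1, by have := p.1.isLt; omega⟩) := dif_pos h
      rw [this] at heq
      have := congrArg (fun q => ((q.1 : Fin (j+2)) : ℕ)) heq
      simp at this; omega
    · have : g p = (⟨(p.2:ℕ)+1, by have := p.2.isLt; have := p.1.isLt; omega⟩,
          ⟨(p.1:ℕ), by have := p.2.isLt; have := p.1.isLt; omega⟩) := dif_neg h
      rw [this] at heq
      have := congrArg (fun q => ((q.1 : Fin (j+2)) : ℕ)) heq
      simp at this; omega
  · intro p; exact Finset.mem_univ _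
  · intro p
    by_cases h : (p.2:ℕ) < (p.1:ℕ)
    · have h0 : g p = (⟨(p.2:ℕ), by have := p.2.isLt; omega⟩,
          ⟨(p.1:ℕ)-1, by have := p.1.isLt; omega⟩) := dif_pos h
      rw [h0]
      have h' : ¬ (((⟨(p.1:ℕ)-1, by have := p.1.isLt; omega⟩ : Fin (j+1)):ℕ)
          < ((⟨(p.2:ℕ), by have := p.2.isLt; omega⟩ : Fin (j+2)):ℕ)) := by
        show ¬ ((p.1:ℕ)-1 < (p.2:ℕ)); omega
      have h1 : g (⟨(p.2:ℕ), by have := p.2.isLt; omega⟩,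
          ⟨(p.1:ℕ)-1, by have := p.1.isLt; omega⟩) = _ := dif_neg h'
      rw [h1]
      apply Prod.ext <;> apply Fin.val_injective <;> simp <;> omega
    · have h0 : g p = (⟨(p.2:ℕ)+1, by have := p.2.isLt; have := p.1.isLt; omega⟩,
          ⟨(p.1:ℕ), by have := p.2.isLt; have := p.1.isLt; omega⟩) := dif_neg h
      rw [h0]
      have h' : (((⟨(p.1:ℕ), by have := p.2.isLt; have := p.1.isLt; omega⟩ : Fin (j+1)):ℕ)
          < ((⟨(p.2:ℕ)+1, by have := p.2.isLt; have := p.1.isLt; omega⟩ : Fin (j+2)):ℕ)) := by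
        show (p.1:ℕ) < (p.2:ℕ)+1; omega
      have h1 : g (⟨(p.2:ℕ)+1, by have := p.2.isLt; have := p.1.isLt; omega⟩,
          ⟨(p.1:ℕ), by have := p.2.isLt; have := p.1.isLt; omega⟩) = _ := dif_pos h'
      rw [h1]
      apply Prod.ext <;> apply Fin.val_injective <;> simp

lemma bdry_comp_bdry (K : SComplex V) (j : ℕ) :
    (bdry K j).comp (bdry K (j+1)) = 0 := by
  apply Finsupp.lhom_ext
  intro s c
  simp [bdry_single, map_smul, bdry_bdryO]

end SComplex

namespace SComplex

variable {V : Type u}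

section generic

lemma lcomap_apply {α β : Type w} (e : α → β) (he : Function.Injective e)
    (x : β →₀ ℚ) (a : α) :
    Finsupp.lcomapDomain (R := ℚ) (M := ℚ) e he x a = x (e a) := rfl

lemma lcomap_single_eq {α β : Type w} (e : α → β) (he : Function.Injective e)
    (a : α) (c : ℚ) :
    Finsupp.lcomapDomain (R := ℚ) (M := ℚ) e he (Finsupp.single (e a) c)
      = Finsupp.single a c := by
  ext b
  rw [lcomap_apply, Finsupp.single_apply, Finsupp.single_apply]
  by_cases hab : a = b
  · subst hab; simp
  · rw [if_neg (fun hh => hab (he hh)), if_neg hab]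

lemma lcomap_single_zero {α β : Type w} (e : α → β) (he : Function.Injective e)
    (b : β) (hb : b ∉ Set.range e) (c : ℚ) :
    Finsupp.lcomapDomain (R := ℚ) (M := ℚ) e he (Finsupp.single b c) = 0 := by
  ext a
  rw [lcomap_apply, Finsupp.single_apply, if_neg (fun hh => hb ⟨a, hh.symm⟩)]
  rfl

end generic

section maps

variable {K₁ K₂ : SComplex V} (h : K₁.faces ⊆ K₂.faces)

/-- Inclusion of simplices of a subcomplex. -/
def inclS (j : ℕ) (t : OSimplex K₁ j) : OSimplex K₂ j := ⟨t.1, h t.2⟩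

lemma inclS_injective (j : ℕ) : Function.Injective (inclS h j) := by
  intro a b hab
  exact Subtype.ext (congrArg (fun t : OSimplex K₂ j => t.1) hab)

/-- Inclusion of chains of a subcomplex. -/
def incl (j : ℕ) : Chain K₁ j →ₗ[ℚ] Chain K₂ j :=
  Finsupp.lmapDomain ℚ ℚ (inclS h j)

/-- Projection of chains onto a subcomplex. -/
def projC (j : ℕ) : Chain K₂ j →ₗ[ℚ] Chain K₁ j :=
  Finsupp.lcomapDomain (inclS h j) (inclS_injective h j)

lemma incl_single (j : ℕ) (t : OSimplex K₁ j) (c : ℚ) :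
    incl h j (Finsupp.single t c) = Finsupp.single (inclS h j t) c :=
  Finsupp.mapDomain_single

lemma incl_injective (j : ℕ) : Function.Injective (incl h j) :=
  Finsupp.mapDomain_injective (inclS_injective h j)

lemma projC_single_incl (j : ℕ) (t : OSimplex K₁ j) (c : ℚ) :
    projC h j (Finsupp.single (inclS h j t) c) = Finsupp.single t c :=
  lcomap_single_eq _ _ _ _

lemma projC_single_zero (j : ℕ) (s : OSimplex K₂ j) (c : ℚ)
    (hs : Finset.univ.image s.1 ∉ K₁.faces) :
    projC h j (Finsupp.single s c) = 0 := by
  refine lcomap_single_zero _ _ _ ?_ _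
  rintro ⟨a, rfl⟩
  exact hs a.2

lemma projC_comp_incl (j : ℕ) (x : Chain K₁ j) : projC h j (incl h j x) = x := by
  ext a
  rw [projC, lcomap_apply, incl, Finsupp.lmapDomain_apply,
    Finsupp.mapDomain_apply (inclS_injective h j)]

lemma incl_bdryO (j : ℕ) (s : OSimplex K₁ (j+1)) :
    incl h j (bdryO K₁ j s) = bdryO K₂ j (inclS h (j+1) s) := by
  rw [bdryO_eq, bdryO_eq, map_sum]
  refine Finset.sum_congr rfl fun i _ => ?_
  rw [incl_single]
  rfl

lemma bdry_incl (j : ℕ) (x : Chain K₁ (j+1)) :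
    bdry K₂ j (incl h (j+1) x) = incl h j (bdry K₁ j x) := by
  have : (bdry K₂ j).comp (incl h (j+1)) = (incl h j).comp (bdry K₁ j) := by
    apply Finsupp.lhom_ext
    intro s c
    simp only [LinearMap.comp_apply, incl_single, bdry_single, map_smul, incl_bdryO]
  exact LinearMap.congr_fun this x

end maps

section delstar

variable (K : SComplex V) (u : V)

/-- Deletion of a vertex. -/
def del : SComplex V where
  faces := {τ | τ ∈ K.faces ∧ u ∉ τ}
  empty_mem := ⟨K.empty_mem, by simp⟩
  down_closed := by
    rintro s t ⟨hs, hus⟩ hts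
    exact ⟨K.down_closed hs hts, fun hut => hus (hts hut)⟩

variable (hu : {u} ∈ K.faces)

/-- Link of a vertex. -/
def lkv : SComplex V where
  faces := {τ | u ∉ τ ∧ insert u τ ∈ K.faces}
  empty_mem := by
    refine ⟨by simp, ?_⟩
    simpa using hu
  down_closed := by
    rintro s t ⟨hus, hs⟩ hts
    exact ⟨fun hut => hus (hts hut), K.down_closed hs (Finset.insert_subset_insert u hts)⟩

/-- Closed star of a vertex. -/
def starv : SComplex V where
  faces := {τ | insert u τ ∈ K.faces}
  empty_mem := by simpa using hu
  down_closed := by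
    intro s t hs hts
    exact K.down_closed hs (Finset.insert_subset_insert u hts)

lemma del_le : (del K u).faces ⊆ K.faces := fun _ hτ => hτ.1

lemma lkv_le_starv : (lkv K u hu).faces ⊆ (starv K u hu).faces := fun _ hτ => hτ.2

lemma starv_le : (starv K u hu).faces ⊆ K.faces := fun τ hτ =>
  K.down_closed hτ (Finset.subset_insert u τ)

lemma image_cons {n : ℕ} (w : V) (t : Fin n → V) :
    Finset.univ.image (Fin.cons w t : Fin (n+1) → V) = insert w (Finset.univ.image t) := by
  ext v
  simp only [Finset.mem_image, Finset.mem_insert]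
  constructor
  · rintro ⟨i, -, rfl⟩
    rcases Fin.eq_zero_or_eq_succ i with rfl | ⟨k, rfl⟩
    · left; simp
    · right; exact ⟨k, Finset.mem_univ _, by simp⟩
  · rintro (rfl | ⟨k, -, rfl⟩)
    · exact ⟨0, Finset.mem_univ _, by simp⟩
    · exact ⟨k.succ, Finset.mem_univ _, by simp⟩

/-- `u`-containing ordered simplices of the closed star. -/
def QS (j : ℕ) : Type u :=
  {s : OSimplex (starv K u hu) j // u ∈ Finset.univ.image s.1}

/-- Chains on `u`-containing simplices of the star. -/
abbrev QC (j : ℕ) : Type u := QS K u hu j →₀ ℚ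

instance (j : ℕ) [Fintype V] : Fintype (QS K u hu j) := by
  unfold QS; infer_instance

instance (j : ℕ) [Fintype V] : FiniteDimensional ℚ (QC K u hu j) :=
  Module.Finite.of_basis (Finsupp.basisSingleOne)

def iotaQ (j : ℕ) : QC K u hu j →ₗ[ℚ] Chain (starv K u hu) j :=
  Finsupp.lmapDomain ℚ ℚ Subtype.val

def piQ (j : ℕ) : Chain (starv K u hu) j →ₗ[ℚ] QC K u hu j :=
  Finsupp.lcomapDomain Subtype.val Subtype.val_injective

def eQK (j : ℕ) : QS K u hu j → OSimplex K j := fun q =>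
  inclS (starv_le K u hu) j q.1

lemma eQK_injective (j : ℕ) : Function.Injective (eQK K u hu j) := by
  intro a b hab
  exact Subtype.ext (Subtype.ext (congrArg (fun t : OSimplex K j => t.1) hab))

def piQK (j : ℕ) : Chain K j →ₗ[ℚ] QC K u hu j :=
  Finsupp.lcomapDomain (eQK K u hu j) (eQK_injective K u hu j)

/-- Cone map on star simplices. -/
def coneS (j : ℕ) (s : OSimplex (starv K u hu) j) : OSimplex (starv K u hu) (j+1) :=
  ⟨Fin.cons u s.1, by
    show insert u (Finset.univ.image (Fin.cons u s.1)) ∈ K.faces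
    rw [image_cons, Finset.insert_idem]
    exact s.2⟩

lemma coneS_injective (j : ℕ) : Function.Injective (coneS K u hu j) := by
  intro a b hab
  have h2 : Fin.cons u a.1 = (Fin.cons u b.1 : Fin (j+1) → V) :=
    congrArg (fun t : OSimplex (starv K u hu) (j+1) => t.1) hab
  refine Subtype.ext ?_
  funext x
  have h3 := congrFun h2 x.succ
  simpa using h3

def coneC (j : ℕ) : Chain (starv K u hu) j →ₗ[ℚ] Chain (starv K u hu) (j+1) :=
  Finsupp.lmapDomain ℚ ℚ (coneS K u hu j)

lemma image_coneS_mem (j : ℕ) (s : OSimplex (starv K u hu) j) :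
    u ∈ Finset.univ.image (coneS K u hu j s).1 := by
  show u ∈ Finset.univ.image (Fin.cons u s.1)
  rw [image_cons]
  exact Finset.mem_insert_self u _

end delstar

end SComplex

namespace SComplex

variable {V : Type u} (K : SComplex V) (u : V) (hu : {u} ∈ K.faces)

lemma iotaQ_single (j : ℕ) (q : QS K u hu j) (c : ℚ) :
    iotaQ K u hu j (Finsupp.single q c) = Finsupp.single q.1 c :=
  Finsupp.mapDomain_single

lemma piQ_single_mem (j : ℕ) (s : OSimplex (starv K u hu) j)
    (hs : u ∈ Finset.univ.image s.1) (c : ℚ) :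
    piQ K u hu j (Finsupp.single s c) = Finsupp.single (⟨s, hs⟩ : QS K u hu j) c :=
  lcomap_single_eq _ _ (⟨s, hs⟩ : QS K u hu j) _

lemma piQ_single_notmem (j : ℕ) (s : OSimplex (starv K u hu) j)
    (hs : u ∉ Finset.univ.image s.1) (c : ℚ) :
    piQ K u hu j (Finsupp.single s c) = 0 :=
  lcomap_single_zero _ _ _ (by rintro ⟨a, rfl⟩; exact hs a.2) _

lemma piQ_iotaQ (j : ℕ) (x : QC K u hu j) :
    piQ K u hu j (iotaQ K u hu j x) = x := by
  ext a
  erw [piQ, lcomap_apply, iotaQ, Finsupp.lmapDomain_apply,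
    Finsupp.mapDomain_apply Subtype.val_injective]
  rfl

lemma piQK_single_mem (j : ℕ) (q : QS K u hu j) (c : ℚ) :
    piQK K u hu j (Finsupp.single (eQK K u hu j q) c) = Finsupp.single q c :=
  lcomap_single_eq _ _ _ _

lemma piQK_single_notmem (j : ℕ) (s : OSimplex K j)
    (hs : u ∉ Finset.univ.image s.1) (c : ℚ) :
    piQK K u hu j (Finsupp.single s c) = 0 :=
  lcomap_single_zero _ _ _ (by rintro ⟨a, rfl⟩; exact hs a.2) _

lemma piQK_incl_starv (j : ℕ) (x : Chain (starv K u hu) j) :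
    piQK K u hu j (incl (starv_le K u hu) j x) = piQ K u hu j x := by
  ext a
  rw [piQK, lcomap_apply]
  show (incl (starv_le K u hu) j x) (inclS (starv_le K u hu) j a.1) = _
  rw [incl, Finsupp.lmapDomain_apply, Finsupp.mapDomain_apply (inclS_injective _ j)]
  rfl

lemma partA_apply (j : ℕ) (y : Chain (starv K u hu) j) :
    iotaQ K u hu j (piQ K u hu j y)
      + incl (lkv_le_starv K u hu) j (projC (lkv_le_starv K u hu) j y) = y := by
  have hcomp : (iotaQ K u hu j).comp (piQ K u hu j)
      + (incl (lkv_le_starv K u hu) j).comp (projC (lkv_le_starv K u hu) j)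
      = LinearMap.id := by
    apply Finsupp.lhom_ext
    intro s c
    simp only [LinearMap.add_apply, LinearMap.comp_apply, LinearMap.id_apply]
    by_cases hs : u ∈ Finset.univ.image s.1
    · erw [piQ_single_mem K u hu j s hs, iotaQ_single,
        projC_single_zero (lkv_le_starv K u hu) j s c (fun hmem => hmem.1 hs),
        map_zero, add_zero]
    · have hface : Finset.univ.image s.1 ∈ (lkv K u hu).faces := ⟨hs, s.2⟩
      have hs' : s = inclS (lkv_le_starv K u hu) j ⟨s.1, hface⟩ := Subtype.ext rfl
      rw [piQ_single_notmem K u hu j s hs, map_zero, zero_add]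
      conv_lhs => erw [hs', projC_single_incl, incl_single]
      rw [← hs']
  exact LinearMap.congr_fun hcomp y

lemma piQ_inclL (j : ℕ) (x : Chain (lkv K u hu) j) :
    piQ K u hu j (incl (lkv_le_starv K u hu) j x) = 0 := by
  have hcomp : (piQ K u hu j).comp (incl (lkv_le_starv K u hu) j) = 0 := by
    apply Finsupp.lhom_ext
    intro t c
    simp only [LinearMap.comp_apply, LinearMap.zero_apply, incl_single]
    exact piQ_single_notmem K u hu j _ t.2.1 c
  exact LinearMap.congr_fun hcomp x

lemma piL_coneC (j : ℕ) (x : Chain (starv K u hu) j) :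
    projC (lkv_le_starv K u hu) (j+1) (coneC K u hu j x) = 0 := by
  have hcomp : (projC (lkv_le_starv K u hu) (j+1)).comp (coneC K u hu j) = 0 := by
    apply Finsupp.lhom_ext
    intro s c
    simp only [LinearMap.comp_apply, LinearMap.zero_apply]
    rw [coneC, Finsupp.lmapDomain_apply, Finsupp.mapDomain_single]
    exact projC_single_zero (lkv_le_starv K u hu) (j+1) _ c
      (fun hmem => hmem.1 (image_coneS_mem K u hu j s))
  exact LinearMap.congr_fun hcomp x

lemma iotaQ_piQ_coneC (j : ℕ) (x : Chain (starv K u hu) j) :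
    iotaQ K u hu (j+1) (piQ K u hu (j+1) (coneC K u hu j x)) = coneC K u hu j x := by
  have := partA_apply K u hu (j+1) (coneC K u hu j x)
  rwa [piL_coneC, map_zero, add_zero] at this

lemma coneS_val (j : ℕ) (s : OSimplex (starv K u hu) j) :
    (coneS K u hu j s).1 = Fin.cons (α := fun _ => V) u s.1 := rfl

lemma faceO_coneS_zero (j : ℕ) (s : OSimplex (starv K u hu) j) :
    faceO (starv K u hu) j (coneS K u hu j s) 0 = s := by
  apply Subtype.ext
  funext x
  have h1 : (faceO (starv K u hu) j (coneS K u hu j s) 0).1 x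
      = (coneS K u hu j s).1 ((0 : Fin (j+1)).succAbove x) := rfl
  rw [h1, coneS_val, Fin.succAbove_zero, Fin.cons_succ]

lemma faceO_coneS_succ (j : ℕ) (s : OSimplex (starv K u hu) (j+1)) (k : Fin (j+1)) :
    faceO (starv K u hu) (j+1) (coneS K u hu (j+1) s) k.succ
      = coneS K u hu j (faceO (starv K u hu) j s k) := by
  apply Subtype.ext
  funext x
  have h1 : (faceO (starv K u hu) (j+1) (coneS K u hu (j+1) s) k.succ).1 x
      = (coneS K u hu (j+1) s).1 (k.succ.succAbove x) := rfl
  have h2 : (coneS K u hu j (faceO (starv K u hu) j s k)).1 x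
      = Fin.cons (α := fun _ => V) u ((faceO (starv K u hu) j s k).1) x := rfl
  rw [h1, h2, coneS_val]
  refine Fin.cases ?_ (fun y => ?_) x
  · rw [Fin.succ_succAbove_zero, Fin.cons_zero, Fin.cons_zero]
  · rw [Fin.succ_succAbove_succ, Fin.cons_succ, Fin.cons_succ]
    rfl

lemma bdryO_coneS_zero (s : OSimplex (starv K u hu) 0) :
    bdryO (starv K u hu) 0 (coneS K u hu 0 s) = Finsupp.single s 1 := by
  rw [bdryO_eq, Fin.sum_univ_one, faceO_coneS_zero]
  norm_num

lemma bdryO_coneS_succ (m : ℕ) (s : OSimplex (starv K u hu) (m+1)) :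
    bdryO (starv K u hu) (m+1) (coneS K u hu (m+1) s)
      = Finsupp.single s 1 - coneC K u hu m (bdryO (starv K u hu) m s) := by
  rw [bdryO_eq, Fin.sum_univ_succ, faceO_coneS_zero]
  simp only [Fin.val_zero, pow_zero]
  rw [sub_eq_add_neg]
  congr 1
  rw [bdryO_eq, map_sum, ← Finset.sum_neg_distrib]
  refine Finset.sum_congr rfl fun k _ => ?_
  rw [coneC, Finsupp.lmapDomain_apply, Finsupp.mapDomain_single, faceO_coneS_succ,
    ← Finsupp.single_neg]
  congr 1
  rw [Fin.val_succ, pow_succ]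
  ring

lemma bdry_coneC_zero (x : Chain (starv K u hu) 0) :
    bdry (starv K u hu) 0 (coneC K u hu 0 x) = x := by
  have hcomp : (bdry (starv K u hu) 0).comp (coneC K u hu 0) = LinearMap.id := by
    apply Finsupp.lhom_ext
    intro s c
    simp only [LinearMap.comp_apply, LinearMap.id_apply]
    rw [coneC, Finsupp.lmapDomain_apply, Finsupp.mapDomain_single, bdry_single,
      bdryO_coneS_zero, Finsupp.smul_single, smul_eq_mul, mul_one]
  exact LinearMap.congr_fun hcomp x

lemma bdry_coneC_succ (m : ℕ) (x : Chain (starv K u hu) (m+1)) :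
    bdry (starv K u hu) (m+1) (coneC K u hu (m+1) x)
      = x - coneC K u hu m (bdry (starv K u hu) m x) := by
  have hcomp : (bdry (starv K u hu) (m+1)).comp (coneC K u hu (m+1))
      = LinearMap.id - (coneC K u hu m).comp (bdry (starv K u hu) m) := by
    apply Finsupp.lhom_ext
    intro s c
    simp only [LinearMap.comp_apply, LinearMap.sub_apply, LinearMap.id_apply]
    rw [coneC, Finsupp.lmapDomain_apply, Finsupp.mapDomain_single, bdry_single,
      bdryO_coneS_succ, smul_sub, Finsupp.smul_single, smul_eq_mul, mul_one,
      bdry_single, map_smul]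
  exact LinearMap.congr_fun hcomp x

/-- The differential of the quotient complex `Q`. -/
def dQm (j : ℕ) : QC K u hu (j+1) →ₗ[ℚ] QC K u hu j :=
  (piQ K u hu j) ∘ₗ (bdry (starv K u hu) j) ∘ₗ (iotaQ K u hu (j+1))

/-- The connecting map `Q → C(lk)[1]`. -/
def deltaM (j : ℕ) : QC K u hu (j+1) →ₗ[ℚ] Chain (lkv K u hu) j :=
  (projC (lkv_le_starv K u hu) j) ∘ₗ (bdry (starv K u hu) j) ∘ₗ (iotaQ K u hu (j+1))

def SQm (j : ℕ) : QC K u hu j →ₗ[ℚ] QC K u hu (j+1) :=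
  (piQ K u hu (j+1)) ∘ₗ (coneC K u hu j) ∘ₗ (iotaQ K u hu j)

def SLm (j : ℕ) : Chain (lkv K u hu) j →ₗ[ℚ] QC K u hu (j+1) :=
  (piQ K u hu (j+1)) ∘ₗ (coneC K u hu j) ∘ₗ (incl (lkv_le_starv K u hu) j)

lemma identity_I1 (m : ℕ) (x : QC K u hu (m+1)) :
    dQm K u hu (m+1) (SQm K u hu (m+1) x) + SQm K u hu m (dQm K u hu m x)
      + SLm K u hu m (deltaM K u hu m x) = x := by
  set w := bdry (starv K u hu) m (iotaQ K u hu (m+1) x) with hw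
  have h1 : dQm K u hu (m+1) (SQm K u hu (m+1) x)
      = x - piQ K u hu (m+1) (coneC K u hu m w) := by
    show piQ K u hu (m+1) (bdry (starv K u hu) (m+1) (iotaQ K u hu (m+2)
      (piQ K u hu (m+2) (coneC K u hu (m+1) (iotaQ K u hu (m+1) x))))) = _
    rw [iotaQ_piQ_coneC, bdry_coneC_succ, map_sub, piQ_iotaQ, ← hw]
  have h2 : SQm K u hu m (dQm K u hu m x) + SLm K u hu m (deltaM K u hu m x)
      = piQ K u hu (m+1) (coneC K u hu m w) := by
    show piQ K u hu (m+1) (coneC K u hu m (iotaQ K u hu m (piQ K u hu m w)))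
      + piQ K u hu (m+1) (coneC K u hu m (incl (lkv_le_starv K u hu) m
        (projC (lkv_le_starv K u hu) m w))) = _
    rw [← map_add, ← map_add, partA_apply]
  rw [h1, add_assoc, h2]
  abel

lemma identity_I2 (m : ℕ) (x : Chain (lkv K u hu) (m+1)) :
    dQm K u hu (m+1) (SLm K u hu (m+1) x)
      = - SLm K u hu m (bdry (lkv K u hu) m x) := by
  show piQ K u hu (m+1) (bdry (starv K u hu) (m+1) (iotaQ K u hu (m+2)
    (piQ K u hu (m+2) (coneC K u hu (m+1) (incl (lkv_le_starv K u hu) (m+1) x))))) = _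
  rw [iotaQ_piQ_coneC, bdry_coneC_succ, map_sub, piQ_inclL, zero_sub,
    bdry_incl]
  rfl

lemma identity_I4 (m : ℕ) (x : QC K u hu (m+2)) :
    bdry (lkv K u hu) m (deltaM K u hu (m+1) x)
      = - deltaM K u hu m (dQm K u hu (m+1) x) := by
  set w := bdry (starv K u hu) (m+1) (iotaQ K u hu (m+2) x) with hw
  have h1 : deltaM K u hu m (dQm K u hu (m+1) x)
      = - bdry (lkv K u hu) m (deltaM K u hu (m+1) x) := by
    show projC (lkv_le_starv K u hu) m (bdry (starv K u hu) m (iotaQ K u hu (m+1)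
      (piQ K u hu (m+1) w))) = _
    have hpart : iotaQ K u hu (m+1) (piQ K u hu (m+1) w)
        = w - incl (lkv_le_starv K u hu) (m+1)
            (projC (lkv_le_starv K u hu) (m+1) w) := by
      rw [eq_sub_iff_add_eq]
      exact partA_apply K u hu (m+1) w
    rw [hpart, map_sub, map_sub]
    have hdd : bdry (starv K u hu) m w = 0 := by
      rw [hw]
      exact LinearMap.congr_fun (bdry_comp_bdry (starv K u hu) m) _
    rw [hdd, map_zero, zero_sub, bdry_incl, projC_comp_incl]
    rfl
  rw [h1, neg_neg]

end SComplex

namespace SComplex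

variable {V : Type u} (K : SComplex V) (u : V) (hu : {u} ∈ K.faces)

lemma piQK_bdry (j : ℕ) (x : Chain K (j+1)) :
    piQK K u hu j (bdry K j x) = dQm K u hu j (piQK K u hu (j+1) x) := by
  have hcomp : (piQK K u hu j).comp (bdry K j)
      = (dQm K u hu j).comp (piQK K u hu (j+1)) := by
    apply Finsupp.lhom_ext
    intro s c
    simp only [LinearMap.comp_apply]
    by_cases hs : u ∈ Finset.univ.image s.1
    · have hsA : Finset.univ.image s.1 ∈ (starv K u hu).faces := by
        show insert u (Finset.univ.image s.1) ∈ K.faces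
        rw [Finset.insert_eq_self.2 hs]
        exact s.2
      have hq : s = eQK K u hu (j+1) (⟨⟨s.1, hsA⟩, hs⟩ : QS K u hu (j+1)) :=
        Subtype.ext rfl
      conv_rhs => erw [hq, piQK_single_mem]
      have hrhs : dQm K u hu j
          (Finsupp.single (⟨⟨s.1, hsA⟩, hs⟩ : QS K u hu (j+1)) c)
          = piQ K u hu j (bdry (starv K u hu) j
              (Finsupp.single (⟨s.1, hsA⟩ : OSimplex (starv K u hu) (j+1)) c)) := by
        show piQ K u hu j (bdry (starv K u hu) j (iotaQ K u hu (j+1) _)) = _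
        erw [iotaQ_single]
      erw [hrhs, bdry_single, bdry_single, map_smul, map_smul]
      congr 1
      have hincl : bdryO K j s
          = incl (starv_le K u hu) j
              (bdryO (starv K u hu) j ⟨s.1, hsA⟩) := by
        erw [incl_bdryO]
        congr 1
      rw [hincl, piQK_incl_starv]
    · rw [piQK_single_notmem K u hu (j+1) s hs, map_zero, bdry_single, map_smul,
        bdryO_eq, map_sum, Finset.sum_eq_zero, smul_zero]
      intro i _
      exact piQK_single_notmem K u hu j _
        (fun hm => hs (image_comp_subset s.1 i.succAbove hm)) _
  exact LinearMap.congr_fun hcomp x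

lemma partK_apply (j : ℕ) (y : Chain K j) :
    incl (del_le K u) j (projC (del_le K u) j y)
      + incl (starv_le K u hu) j (iotaQ K u hu j (piQK K u hu j y)) = y := by
  have hcomp : (incl (del_le K u) j).comp (projC (del_le K u) j)
      + (incl (starv_le K u hu) j).comp ((iotaQ K u hu j).comp (piQK K u hu j))
      = LinearMap.id := by
    apply Finsupp.lhom_ext
    intro s c
    simp only [LinearMap.add_apply, LinearMap.comp_apply, LinearMap.id_apply]
    by_cases hs : u ∈ Finset.univ.image s.1
    · have hsA : Finset.univ.image s.1 ∈ (starv K u hu).faces := by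
        show insert u (Finset.univ.image s.1) ∈ K.faces
        rw [Finset.insert_eq_self.2 hs]
        exact s.2
      have hq : s = eQK K u hu j (⟨⟨s.1, hsA⟩, hs⟩ : QS K u hu j) := Subtype.ext rfl
      rw [projC_single_zero (del_le K u) j s c (fun hmem => hmem.2 hs), map_zero,
        zero_add]
      conv_lhs => erw [hq, piQK_single_mem, iotaQ_single]
      show incl (starv_le K u hu) j
        (Finsupp.single (⟨s.1, hsA⟩ : OSimplex (starv K u hu) j) c) = _
      erw [incl_single]
      congr 1
    · have hsD : Finset.univ.image s.1 ∈ (del K u).faces := ⟨s.2, hs⟩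
      have hs' : s = inclS (del_le K u) j ⟨s.1, hsD⟩ := Subtype.ext rfl
      rw [piQK_single_notmem K u hu j s hs, map_zero, map_zero, add_zero]
      conv_lhs => erw [hs', projC_single_incl, incl_single]
      rw [← hs']
  exact LinearMap.congr_fun hcomp y

lemma gamma_mem (m : ℕ) (z : Chain K (m+1)) (hz : z ∈ cyclesAt K (m+1)) :
    deltaM K u hu m (piQK K u hu (m+1) z) ∈ cyclesAt (lkv K u hu) m := by
  cases m with
  | zero => exact Submodule.mem_top
  | succ m' =>
    show _ ∈ LinearMap.ker (bdry (lkv K u hu) m')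
    rw [LinearMap.mem_ker, identity_I4, ← piQK_bdry]
    have hz' : bdry K (m'+1) z = 0 := hz
    rw [hz', map_zero, map_zero, neg_zero]

lemma gamma_bdry (m : ℕ) (c : Chain K (m+2)) :
    deltaM K u hu m (piQK K u hu (m+1) (bdry K (m+1) c))
      = - bdry (lkv K u hu) m (deltaM K u hu (m+1) (piQK K u hu (m+2) c)) := by
  rw [piQK_bdry, identity_I4, neg_neg]

/-- Cycle-level connecting map. -/
def Zgamma (m : ℕ) : cyclesAt K (m+1) →ₗ[ℚ] cyclesAt (lkv K u hu) m :=
  LinearMap.codRestrict _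
    ((deltaM K u hu m ∘ₗ piQK K u hu (m+1)) ∘ₗ (cyclesAt K (m+1)).subtype)
    (fun z => gamma_mem K u hu m z.1 z.2)

/-- Homology-level connecting map. -/
def alphaH (m : ℕ) : homologyAt K (m+1) →ₗ[ℚ] homologyAt (lkv K u hu) m :=
  Submodule.mapQ _ _ (Zgamma K u hu m) (by
    rintro ⟨z, hz⟩ hmem
    simp only [Submodule.mem_comap, Submodule.subtype_apply] at hmem ⊢
    obtain ⟨c, hc⟩ := hmem
    show deltaM K u hu m (piQK K u hu (m+1) z) ∈ boundariesAt (lkv K u hu) m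
    rw [← hc, gamma_bdry]
    exact ⟨-(deltaM K u hu (m+1) (piQK K u hu (m+2) c)), by rw [map_neg]⟩)

/-- Cycle-level map induced by inclusion of the deletion. -/
def Zbeta (m : ℕ) : cyclesAt (del K u) (m+1) →ₗ[ℚ] cyclesAt K (m+1) :=
  LinearMap.codRestrict _
    ((incl (del_le K u) (m+1)) ∘ₗ (cyclesAt (del K u) (m+1)).subtype)
    (fun z => by
      show incl (del_le K u) (m+1) z.1 ∈ LinearMap.ker (bdry K m)
      rw [LinearMap.mem_ker, bdry_incl]
      have hz : bdry (del K u) m z.1 = 0 := z.2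
      rw [hz, map_zero])

/-- Homology-level map induced by inclusion of the deletion. -/
def betaH (m : ℕ) : homologyAt (del K u) (m+1) →ₗ[ℚ] homologyAt K (m+1) :=
  Submodule.mapQ _ _ (Zbeta K u m) (by
    rintro ⟨z, hz⟩ hmem
    simp only [Submodule.mem_comap, Submodule.subtype_apply] at hmem ⊢
    obtain ⟨c, hc⟩ := hmem
    show incl (del_le K u) (m+1) z ∈ boundariesAt K (m+1)
    refine ⟨incl (del_le K u) (m+2) c, ?_⟩
    rw [bdry_incl, hc])

lemma ker_alpha_le_range_beta (m : ℕ) :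
    LinearMap.ker (alphaH K u hu m) ≤ LinearMap.range (betaH K u m) := by
  intro x hx
  obtain ⟨⟨z, hz⟩, rfl⟩ := Submodule.Quotient.mk_surjective _ x
  rw [LinearMap.mem_ker, alphaH, Submodule.mapQ_apply, Submodule.Quotient.mk_eq_zero] at hx
  simp only [Submodule.mem_comap, Submodule.subtype_apply] at hx
  obtain ⟨w, hw⟩ : ∃ w, bdry (lkv K u hu) m w = deltaM K u hu m (piQK K u hu (m+1) z) := hx
  have hz0 : bdry K m z = 0 := hz
  set q : QC K u hu (m+2)
    := SQm K u hu (m+1) (piQK K u hu (m+1) z) - SLm K u hu (m+1) w with hqdef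
  have hq : dQm K u hu (m+1) q = piQK K u hu (m+1) z := by
    rw [hqdef, map_sub]
    have hI1 := identity_I1 K u hu m (piQK K u hu (m+1) z)
    have h2 : dQm K u hu m (piQK K u hu (m+1) z) = 0 := by
      rw [← piQK_bdry, hz0, map_zero]
    rw [h2, map_zero, add_zero] at hI1
    have h3 : SLm K u hu m (bdry (lkv K u hu) m w)
        = - dQm K u hu (m+1) (SLm K u hu (m+1) w) := by
      rw [identity_I2, neg_neg]
    rw [← hw, h3, ← sub_eq_add_neg] at hI1
    exact hI1
  set c : Chain K (m+2) := incl (starv_le K u hu) (m+2) (iotaQ K u hu (m+2) q)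
    with hcdef
  set z' : Chain K (m+1) := z - bdry K (m+1) c with hz'def
  have hz'Q : piQK K u hu (m+1) z' = 0 := by
    rw [hz'def, map_sub, piQK_bdry, hcdef, piQK_incl_starv, piQ_iotaQ, hq, sub_self]
  have hz'D : incl (del_le K u) (m+1) (projC (del_le K u) (m+1) z') = z' := by
    have hpart := partK_apply K u hu (m+1) z'
    rwa [hz'Q, map_zero, map_zero, add_zero] at hpart
  have hz'cyc : bdry K m z' = 0 := by
    have hdd : bdry K m (bdry K (m+1) c) = 0 :=
      LinearMap.congr_fun (bdry_comp_bdry K m) c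
    rw [hz'def, map_sub, hz0, zero_sub, hdd, neg_zero]
  set d' := projC (del_le K u) (m+1) z' with hd'
  have hd'cyc : d' ∈ cyclesAt (del K u) (m+1) := by
    show bdry (del K u) m d' = 0
    apply incl_injective (del_le K u) m
    rw [← bdry_incl, hd', hz'D, hz'cyc, map_zero]
  refine ⟨Submodule.Quotient.mk ⟨d', hd'cyc⟩, ?_⟩
  rw [betaH, Submodule.mapQ_apply, Submodule.Quotient.eq]
  rw [Submodule.mem_comap]
  have hval : ((Submodule.subtype _)
      (Zbeta K u m ⟨d', hd'cyc⟩ - (⟨z, hz⟩ : cyclesAt K (m+1))))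
      = - bdry K (m+1) c := by
    rw [map_sub]
    show incl (del_le K u) (m+1) d' - z = - bdry K (m+1) c
    rw [hd', hz'D, hz'def]
    abel
  rw [hval]
  exact ⟨-c, by rw [map_neg]⟩

lemma level_ineq [Fintype V] (m : ℕ) :
    finrank ℚ (homologyAt K (m+1))
      ≤ finrank ℚ (homologyAt (del K u) (m+1))
        + finrank ℚ (homologyAt (lkv K u hu) m) := by
  have h1 := LinearMap.finrank_range_add_finrank_ker (alphaH K u hu m)
  have h2 : finrank ℚ (LinearMap.range (alphaH K u hu m))
      ≤ finrank ℚ (homologyAt (lkv K u hu) m) := Submodule.finrank_le _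
  have h3 : finrank ℚ (LinearMap.ker (alphaH K u hu m))
      ≤ finrank ℚ (LinearMap.range (betaH K u m)) :=
    Submodule.finrank_mono (ker_alpha_le_range_beta K u hu m)
  have h4 : finrank ℚ (LinearMap.range (betaH K u m))
      ≤ finrank ℚ (homologyAt (del K u) (m+1)) := LinearMap.finrank_range_le _
  omega

end SComplex

namespace SComplex

variable {V : Type u}

lemma homology0_subsingleton [Fintype V] (K : SComplex V) (u : V)
    (hu : {u} ∈ K.faces) : Subsingleton (homologyAt K 0) := by
  refine (Submodule.Quotient.subsingleton_iff).mpr ?_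
  rw [eq_top_iff]
  rintro ⟨x, hx⟩ -
  rw [Submodule.mem_comap, Submodule.subtype_apply]
  set t0 : OSimplex K 0 := ⟨fun i => i.elim0, by
    rw [show (Finset.univ : Finset (Fin 0)) = ∅ from Finset.univ_eq_empty,
      Finset.image_empty]
    exact K.empty_mem⟩ with ht0
  have him : (Finset.univ : Finset (Fin 1)).image (fun _ => u) = {u} := by
    ext v
    simp [eq_comm]
  set su : OSimplex K 1 := ⟨fun _ => u, by rw [him]; exact hu⟩ with hsu
  have hbd : bdry K 0 (Finsupp.single su (1:ℚ)) = Finsupp.single t0 1 := by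
    rw [bdry_single, one_smul, bdryO_eq, Fin.sum_univ_one]
    have hface : faceO K 0 su 0 = t0 := Subtype.ext (funext fun i => i.elim0)
    rw [hface]
    norm_num
  have hspan : x = (x t0) • Finsupp.single t0 (1:ℚ) := by
    ext a
    have ha : a = t0 := Subtype.ext (funext fun i => i.elim0)
    subst ha
    simp
  refine ⟨(x t0) • Finsupp.single su (1:ℚ), ?_⟩
  rw [map_smul, hbd, ← hspan]

lemma homology_novert_eq_zero [Fintype V] (K : SComplex V)
    (hK : ∀ v : V, {v} ∉ K.faces) (j : ℕ) (hj : 1 ≤ j) :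
    finrank ℚ (homologyAt K j) = 0 := by
  obtain ⟨m, rfl⟩ : ∃ m, j = m + 1 := ⟨j - 1, by omega⟩
  have hempty : IsEmpty (OSimplex K (m+1)) := by
    constructor
    intro t
    apply hK (t.1 0)
    apply K.down_closed t.2
    rw [Finset.singleton_subset_iff]
    exact Finset.mem_image_of_mem t.1 (Finset.mem_univ 0)
  haveI hsub : Subsingleton (Chain K (m+1)) := by
    constructor
    intro a b
    ext x
    exact (hempty.false x).elim
  have h1 : finrank ℚ (homologyAt K (m+1)) ≤ finrank ℚ (Chain K (m+1)) :=
    le_trans (Submodule.finrank_quotient_le _) (Submodule.finrank_le _)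
  have h2 : finrank ℚ (Chain K (m+1)) = 0 := Module.finrank_zero_of_subsingleton
  omega

/-- Number of vertices of a complex. -/
def nverts (K : SComplex V) [Fintype V] : ℕ :=
  (Finset.univ.filter (fun v => {v} ∈ K.faces)).card

lemma nverts_del_lt [Fintype V] (K : SComplex V) (u : V) (hu : {u} ∈ K.faces) :
    nverts (del K u) < nverts K := by
  have hsub : Finset.univ.filter (fun v => {v} ∈ (del K u).faces)
      = (Finset.univ.filter (fun v => {v} ∈ K.faces)).erase u := by
    ext v
    simp only [Finset.mem_filter, Finset.mem_univ, true_and, Finset.mem_erase]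
    constructor
    · rintro ⟨h1, h2⟩
      refine ⟨?_, h1⟩
      intro rfl'
      exact h2 (by rw [rfl']; exact Finset.mem_singleton_self u)
    · rintro ⟨h1, h2⟩
      refine ⟨h2, ?_⟩
      intro hv
      exact h1 (Finset.mem_singleton.mp hv).symm
  rw [nverts, hsub]
  apply Finset.card_erase_lt_of_mem
  rw [Finset.mem_filter]
  exact ⟨Finset.mem_univ u, hu⟩

lemma nverts_lkv_lt [Fintype V] (K : SComplex V) (u : V) (hu : {u} ∈ K.faces) :
    nverts (lkv K u hu) < nverts K := by
  have hsub : Finset.univ.filter (fun v => {v} ∈ (lkv K u hu).faces)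
      ⊆ (Finset.univ.filter (fun v => {v} ∈ K.faces)).erase u := by
    intro v hv
    rw [Finset.mem_filter] at hv
    obtain ⟨-, h1, h2⟩ := hv
    rw [Finset.mem_erase, Finset.mem_filter]
    refine ⟨?_, Finset.mem_univ v, K.down_closed h2 ?_⟩
    · intro rfl'
      exact h1 (by rw [rfl']; exact Finset.mem_singleton_self u)
    · intro w hw
      rw [Finset.mem_singleton] at hw
      subst hw
      exact Finset.mem_insert_of_mem (Finset.mem_singleton_self _)
  calc nverts (lkv K u hu)
      ≤ ((Finset.univ.filter (fun v => {v} ∈ K.faces)).erase u).card :=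
        Finset.card_le_card hsub
    _ < nverts K := by
        apply Finset.card_erase_lt_of_mem
        rw [Finset.mem_filter]
        exact ⟨Finset.mem_univ u, hu⟩

lemma vanish [Fintype V] : ∀ (n : ℕ) (K : SComplex V), nverts K ≤ n →
    ∀ j, n + 1 ≤ j → finrank ℚ (homologyAt K j) = 0 := by
  intro n
  induction n with
  | zero =>
    intro K hK j hj
    apply homology_novert_eq_zero K _ j (by omega)
    intro v hv
    have : v ∈ Finset.univ.filter (fun v => {v} ∈ K.faces) := by
      rw [Finset.mem_filter]; exact ⟨Finset.mem_univ v, hv⟩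
    have hcard := Finset.card_pos.mpr ⟨v, this⟩
    have hK' : (Finset.univ.filter (fun v => {v} ∈ K.faces)).card ≤ 0 := hK
    omega
  | succ n ih =>
    intro K hK j hj
    by_cases hex : ∃ v : V, {v} ∈ K.faces
    · obtain ⟨w, hw⟩ := hex
      obtain ⟨m, rfl⟩ : ∃ m, j = m + 1 := ⟨j - 1, by omega⟩
      have hstep := level_ineq K w hw m
      have hD := ih (del K w) (by have := nverts_del_lt K w hw; omega) (m+1) (by omega)
      have hL := ih (lkv K w hw) (by have := nverts_lkv_lt K w hw; omega) m (by omega)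
      omega
    · push_neg at hex
      exact homology_novert_eq_zero K hex j (by omega)

lemma totalBetti_eq_sum [Fintype V] (K : SComplex V) (N : ℕ)
    (hvan : ∀ j, N ≤ j → finrank ℚ (homologyAt K j) = 0) :
    totalBetti K = ∑ j ∈ Finset.range N, bettiAt K j := by
  have hsub : ∀ j, N ≤ j → Subsingleton (homologyAt K j) := fun j hj =>
    Module.finrank_zero_iff.mp (hvan j hj)
  set φ : ∀ j : ℕ, homologyAt K j →ₗ[ℚ] (⨁ i : Fin N, homologyAt K (i:ℕ)) :=
    fun j => if h : j < N then
      DirectSum.lof ℚ (Fin N) (fun i => homologyAt K (i:ℕ)) ⟨j, h⟩ else 0 with hφ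
  set f : (⨁ j : ℕ, homologyAt K j) →ₗ[ℚ] (⨁ i : Fin N, homologyAt K (i:ℕ)) :=
    DirectSum.toModule ℚ ℕ _ φ with hf
  set g : (⨁ i : Fin N, homologyAt K (i:ℕ)) →ₗ[ℚ] (⨁ j : ℕ, homologyAt K j) :=
    DirectSum.toModule ℚ (Fin N) _
      (fun i => DirectSum.lof ℚ ℕ (fun j => homologyAt K j) (i:ℕ)) with hg
  have hfg : f ∘ₗ g = LinearMap.id := by
    apply DirectSum.linearMap_ext
    intro i
    apply LinearMap.ext
    intro x
    simp only [LinearMap.comp_apply, LinearMap.id_apply]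
    rw [hg, DirectSum.toModule_lof, hf, DirectSum.toModule_lof, hφ]
    simp only []
    rw [dif_pos i.isLt]
  have hgf : g ∘ₗ f = LinearMap.id := by
    apply DirectSum.linearMap_ext
    intro j
    apply LinearMap.ext
    intro x
    simp only [LinearMap.comp_apply, LinearMap.id_apply]
    rw [hf, DirectSum.toModule_lof, hφ]
    simp only []
    by_cases h : j < N
    · rw [dif_pos h, hg, DirectSum.toModule_lof]
    · rw [dif_neg h]
      haveI := hsub j (by omega)
      rw [LinearMap.zero_apply, map_zero, Subsingleton.elim x 0, map_zero]
  have h1 : totalBetti K = finrank ℚ (⨁ i : Fin N, homologyAt K (i:ℕ)) :=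
    (LinearEquiv.ofLinear f g hfg hgf).finrank_eq
  haveI : ∀ i : Fin N, Module.Free ℚ (homologyAt K (i:ℕ)) := fun _ => Module.Free.of_divisionRing ℚ _
  rw [h1, finrank_directSum, ← Fin.sum_univ_eq_sum_range]
  rfl

lemma totalBetti_step [Fintype V] (K : SComplex V) (u : V) (hu : {u} ∈ K.faces) :
    totalBetti K ≤ totalBetti (del K u) + totalBetti (lkv K u hu) := by
  set N : ℕ := nverts K + 1 with hN
  have hvK : ∀ j, N + 1 ≤ j → finrank ℚ (homologyAt K j) = 0 := fun j hj =>
    vanish (nverts K) K le_rfl j (by omega)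
  have hvD : ∀ j, N ≤ j → finrank ℚ (homologyAt (del K u) j) = 0 := fun j hj =>
    vanish (nverts K - 1) (del K u) (by have := nverts_del_lt K u hu; omega) j
      (by have := nverts_del_lt K u hu; omega)
  have hvL : ∀ j, N ≤ j → finrank ℚ (homologyAt (lkv K u hu) j) = 0 := fun j hj =>
    vanish (nverts K - 1) (lkv K u hu) (by have := nverts_lkv_lt K u hu; omega) j
      (by have := nverts_lkv_lt K u hu; omega)
  rw [totalBetti_eq_sum K (N+1) hvK, totalBetti_eq_sum (del K u) (N+1)
    (fun j hj => hvD j (by omega)), totalBetti_eq_sum (lkv K u hu) N hvL]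
  have h0 : bettiAt K 0 = 0 := by
    haveI := homology0_subsingleton K u hu
    exact Module.finrank_zero_of_subsingleton
  rw [Finset.sum_range_succ' _ N, Finset.sum_range_succ' (fun j => bettiAt (del K u) j) N]
  have hlev : ∀ m, bettiAt K (m+1)
      ≤ bettiAt (del K u) (m+1) + bettiAt (lkv K u hu) m := fun m =>
    level_ineq K u hu m
  calc (∑ i ∈ Finset.range N, bettiAt K (i+1)) + bettiAt K 0
      ≤ (∑ i ∈ Finset.range N, (bettiAt (del K u) (i+1) + bettiAt (lkv K u hu) i)) := by
        rw [h0, add_zero]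
        exact Finset.sum_le_sum (fun i _ => hlev i)
    _ = (∑ i ∈ Finset.range N, bettiAt (del K u) (i+1))
        + ∑ i ∈ Finset.range N, bettiAt (lkv K u hu) i := Finset.sum_add_distrib
    _ ≤ ((∑ i ∈ Finset.range N, bettiAt (del K u) (i+1)) + bettiAt (del K u) 0)
        + ∑ i ∈ Finset.range N, bettiAt (lkv K u hu) i := by omega
end SComplex

namespace SComplex

variable {V : Type u} (K : SComplex V) (u : V) (hu : {u} ∈ K.faces)

lemma facesIn_del (U : Set V) :
    facesIn (del K u) U = {σ | σ ∈ facesIn K U ∧ u ∉ σ} := by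
  ext σ
  constructor
  · rintro ⟨⟨h1, h2⟩, h3⟩
    exact ⟨⟨h1, h3⟩, h2⟩
  · rintro ⟨⟨h1, h3⟩, h2⟩
    exact ⟨⟨h1, h2⟩, h3⟩

lemma facesIn_lkv_image (U : Set V) (huU : u ∈ U) :
    (fun τ => insert u τ) '' (facesIn (lkv K u hu) U)
      = {σ | σ ∈ facesIn K U ∧ u ∈ σ} := by
  ext σ
  constructor
  · rintro ⟨τ, ⟨⟨hτ1, hτ2⟩, hτ3⟩, rfl⟩
    refine ⟨⟨hτ2, ?_⟩, Finset.mem_insert_self u τ⟩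
    intro v hv
    rcases Finset.mem_insert.mp hv with rfl | hv'
    · exact huU
    · exact hτ3 v hv'
  · rintro ⟨⟨h1, h2⟩, h3⟩
    refine ⟨σ.erase u, ⟨⟨Finset.notMem_erase u σ, ?_⟩, ?_⟩, Finset.insert_erase h3⟩
    · rw [Finset.insert_erase h3]
      exact h1
    · intro v hv
      exact h2 v (Finset.erase_subset u σ hv)

lemma facesIn_lkv_injOn (U : Set V) :
    Set.InjOn (fun τ => insert u τ) (facesIn (lkv K u hu) U) := by
  rintro τ₁ ⟨⟨h1, -⟩, -⟩ τ₂ ⟨⟨h2, -⟩, -⟩ heq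
  have := congrArg (fun s => Finset.erase s u) heq
  simpa [Finset.erase_insert h1, Finset.erase_insert h2] using this

lemma facesIn_split [Fintype V] (U : Set V) (huU : u ∈ U) :
    (facesIn K U).ncard
      = (facesIn (del K u) U).ncard + (facesIn (lkv K u hu) U).ncard := by
  have hdisj : Disjoint {σ | σ ∈ facesIn K U ∧ u ∉ σ}
      {σ | σ ∈ facesIn K U ∧ u ∈ σ} := by
    rw [Set.disjoint_left]
    rintro σ ⟨-, h1⟩ ⟨-, h2⟩
    exact h1 h2
  have hunion : facesIn K U = {σ | σ ∈ facesIn K U ∧ u ∉ σ}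
      ∪ {σ | σ ∈ facesIn K U ∧ u ∈ σ} := by
    ext σ
    constructor
    · intro hσ
      by_cases hin : u ∈ σ
      · exact Or.inr ⟨hσ, hin⟩
      · exact Or.inl ⟨hσ, hin⟩
    · rintro (⟨hσ, -⟩ | ⟨hσ, -⟩) <;> exact hσ
  rw [hunion, Set.ncard_union_eq hdisj (Set.toFinite _) (Set.toFinite _)]
  congr 1
  · rw [facesIn_del]
  · rw [← facesIn_lkv_image K u hu U huU,
      Set.ncard_image_of_injOn (facesIn_lkv_injOn K u hu U)]

lemma lkW_del (U : Set V) (huU : u ∈ U) (σ : Finset V)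
    (hσ : σ ∈ (del K u).faces) :
    lkW (del K u) U σ hσ = lkW K U σ (del_le K u hσ) := by
  apply ext'
  ext τ
  constructor
  · rintro ⟨h1, h2⟩
    exact ⟨h1, h2.1⟩
  · rintro ⟨h1, h2⟩
    refine ⟨h1, h2, ?_⟩
    rw [Finset.mem_union]
    rintro (h3 | h3)
    · exact h1 u h3 huU
    · exact hσ.2 h3

lemma lkW_lkv (U : Set V) (huU : u ∈ U) (σ : Finset V)
    (hσ : σ ∈ (lkv K u hu).faces) :
    lkW (lkv K u hu) U σ hσ = lkW K U (insert u σ) hσ.2 := by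
  apply ext'
  ext τ
  constructor
  · rintro ⟨h1, h2, h3⟩
    refine ⟨h1, ?_⟩
    rw [Finset.union_insert]
    exact h3
  · rintro ⟨h1, h2⟩
    rw [Finset.union_insert] at h2
    refine ⟨h1, ?_, h2⟩
    rw [Finset.mem_union]
    rintro (h3 | h3)
    · exact h1 u h3 huU
    · exact hσ.1 h3

lemma lkW_empty_eq (U : Set V) (hno : ∀ v ∈ U, {v} ∉ K.faces) :
    lkW K U ∅ K.empty_mem = K := by
  apply ext'
  ext τ
  constructor
  · rintro ⟨-, h2⟩
    rwa [Finset.union_empty] at h2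
  · intro hτ
    refine ⟨?_, by rwa [Finset.union_empty]⟩
    intro v hv hvU
    exact hno v hvU (K.down_closed hτ (Finset.singleton_subset_iff.mpr hv))

end SComplex

theorem statement13' {V : Type} [Fintype V] (U : Set V) (B : ℕ) :
    ∀ (n : ℕ) (K : SComplex V),
      (Finset.univ.filter (fun v => v ∈ U ∧ {v} ∈ K.faces)).card = n →
      (∀ σ : Finset V, (hσ : σ ∈ K.faces) → (∀ v ∈ σ, v ∈ U) →
        SComplex.totalBetti (SComplex.lkW K U σ hσ) ≤ B) →
      SComplex.totalBetti K ≤ B * (SComplex.facesIn K U).ncard := by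
  intro n
  induction n using Nat.strong_induction_on with
  | _ n ih =>
    intro K hcard hhyp
    by_cases hex : ∃ v, v ∈ U ∧ {v} ∈ K.faces
    · obtain ⟨u, huU, hu⟩ := hex
      have humem : u ∈ Finset.univ.filter (fun v => v ∈ U ∧ {v} ∈ K.faces) := by
        rw [Finset.mem_filter]
        exact ⟨Finset.mem_univ u, huU, hu⟩
      have herase : ∀ (M : SComplex V), (∀ v : V, {v} ∈ M.faces → {v} ∈ K.faces ∧ v ≠ u) →
          (Finset.univ.filter (fun v => v ∈ U ∧ {v} ∈ M.faces)).card < n := by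
        intro M hM
        have hsub : Finset.univ.filter (fun v => v ∈ U ∧ {v} ∈ M.faces)
            ⊆ (Finset.univ.filter (fun v => v ∈ U ∧ {v} ∈ K.faces)).erase u := by
          intro v hv
          rw [Finset.mem_filter] at hv
          obtain ⟨-, hvU, hvM⟩ := hv
          obtain ⟨hvK, hvu⟩ := hM v hvM
          rw [Finset.mem_erase, Finset.mem_filter]
          exact ⟨hvu, Finset.mem_univ v, hvU, hvK⟩
        calc (Finset.univ.filter (fun v => v ∈ U ∧ {v} ∈ M.faces)).card
            ≤ ((Finset.univ.filter (fun v => v ∈ U ∧ {v} ∈ K.faces)).erase u).card :=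
              Finset.card_le_card hsub
          _ < n := by
              rw [← hcard]
              exact Finset.card_erase_lt_of_mem humem
      have hdel := ih _ (herase (SComplex.del K u) (by
          intro v hv
          refine ⟨hv.1, ?_⟩
          intro rfl'
          exact hv.2 (by rw [rfl']; exact Finset.mem_singleton_self u)))
        (SComplex.del K u) rfl (by
          intro σ hσ hσU
          rw [SComplex.lkW_del K u U huU σ hσ]
          exact hhyp σ (SComplex.del_le K u hσ) hσU)
      have hlkv := ih _ (herase (SComplex.lkv K u hu) (by
          intro v hv
          refine ⟨K.down_closed hv.2 ?_, ?_⟩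
          · intro w hw
            rw [Finset.mem_singleton] at hw
            subst hw
            exact Finset.mem_insert_of_mem (Finset.mem_singleton_self _)
          · intro rfl'
            exact hv.1 (by rw [rfl']; exact Finset.mem_singleton_self u)))
        (SComplex.lkv K u hu) rfl (by
          intro σ hσ hσU
          rw [SComplex.lkW_lkv K u hu U huU σ hσ]
          refine hhyp (insert u σ) hσ.2 ?_
          intro v hv
          rcases Finset.mem_insert.mp hv with rfl | hv'
          · exact huU
          · exact hσU v hv')
      have hstep := SComplex.totalBetti_step K u hu
      have hsplit := SComplex.facesIn_split K u hu U huU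
      rw [hsplit, Nat.mul_add]
      omega
    · push_neg at hex
      have hb := hhyp ∅ K.empty_mem (by simp)
      rw [SComplex.lkW_empty_eq K U hex] at hb
      have hpos : 0 < (SComplex.facesIn K U).ncard := by
        rw [Set.ncard_pos (Set.toFinite _)]
        exact ⟨∅, K.empty_mem, by simp⟩
      calc SComplex.totalBetti K ≤ B := hb
        _ = B * 1 := by omega
        _ ≤ B * (SComplex.facesIn K U).ncard := Nat.mul_le_mul_left B hpos


/-- Let `K` be a finite simplicial complex with a partition
`V(K) = U ⊔ W` of its vertex set (`W = Uᶜ`), and suppose that for every face `σ` of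
`K[U]` (including the empty face) one has `β̃(lk_W σ) ≤ B`.  Then
`β̃(K) ≤ B · |K[U]|`, where `|K[U]|` counts the faces of `K[U]` including the empty
one. -/
theorem statement13 {V : Type} [Fintype V] (K : SComplex V) (U : Set V) (B : ℕ)
    (h : ∀ σ : Finset V, (hσ : σ ∈ K.faces) → (∀ v ∈ σ, v ∈ U) →
      SComplex.totalBetti (SComplex.lkW K U σ hσ) ≤ B) :
    SComplex.totalBetti K ≤ B * (SComplex.facesIn K U).ncard := by
  exact statement13' U B _ K rfl h
end
end
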